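/- arXiv:2508.11519 — 4 statements merged into one kernel-verified Lean document; each statement's English description precedes it below -/
import Mathlib

section
/- Let f : ℝⁿ → ℝ be L-Lipschitz and μ > 0. Then for every x, the gradient of the uniform smoothing f_μ admits the symmetric representation ∇f_μ(x) = (n/(2μ)) E_{W ~ Unif(S^{n-1})}[(f(x + μW) - f(x - μW)) W], where W is uniform on the unit sphere. -/
open MeasureTheory Metric
open scoped NNReal ENNReal

/-- Uniform probability measure on the closed unit ball of `ℝⁿ`. -/
noncomputable def unifBall (n : ℕ) : Measure (EuclideanSpace ℝ (Fin n)) :=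
  (volume (closedBall (0 : EuclideanSpace ℝ (Fin n)) 1))⁻¹ •
    (volume : Measure (EuclideanSpace ℝ (Fin n))).restrict (closedBall 0 1)

/-- Uniform probability measure on the unit sphere of `ℝⁿ`, viewed as a measure on `ℝⁿ`. -/
noncomputable def unifSphere (n : ℕ) : Measure (EuclideanSpace ℝ (Fin n)) :=
  ((volume : Measure (EuclideanSpace ℝ (Fin n))).toSphere Set.univ)⁻¹ •
    ((volume : Measure (EuclideanSpace ℝ (Fin n))).toSphere.map Subtype.val)

section Auxiliary
open intervalIntegral Set
open scoped RealInnerProductSpace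

lemma pow_est (m : ℕ) {r : ℝ} (h0 : 0 ≤ r) (h2 : r ≤ 2) :
    |r ^ m - 1| ≤ m * 2 ^ m * |r - 1| := by
  induction m with
  | zero => simp
  | succ m ih =>
    have h1 : |r ^ m| ≤ 2 ^ m := by
      rw [abs_of_nonneg (pow_nonneg h0 m)]
      exact pow_le_pow_left₀ h0 h2 m
    have he : r ^ (m + 1) - 1 = r ^ m * (r - 1) + (r ^ m - 1) := by ring
    rw [he]
    calc |r ^ m * (r - 1) + (r ^ m - 1)| ≤ |r ^ m * (r - 1)| + |r ^ m - 1| := abs_add_le _ _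
      _ ≤ 2 ^ m * |r - 1| + m * 2 ^ m * |r - 1| := by
          rw [abs_mul]; gcongr
      _ ≤ (m + 1 : ℕ) * 2 ^ (m + 1) * |r - 1| := by
          have h4 : (0:ℝ) ≤ |r - 1| := abs_nonneg _
          have h5 : (0:ℝ) ≤ (2:ℝ) ^ m := by positivity
          have h6 : (2:ℝ) ^ (m + 1) = 2 * 2 ^ m := by ring
          have hA : (0:ℝ) ≤ 2 ^ m * |r - 1| := mul_nonneg h5 h4
          have hm : (0:ℝ) ≤ (m:ℝ) := Nat.cast_nonneg m
          push_cast; rw [h6]; nlinarith [mul_nonneg hm hA]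

lemma sqrt_one_add_sub_one {δ : ℝ} (h : -1 ≤ δ) : |Real.sqrt (1 + δ) - 1| ≤ |δ| := by
  rw [abs_le]
  constructor
  · rcases le_or_gt 1 |δ| with h1 | h1
    · have := Real.sqrt_nonneg (1 + δ)
      have := abs_nonneg δ; linarith
    · have h2 : (1 - |δ|) ^ 2 ≤ 1 + δ := by
        have := neg_abs_le δ
        have := abs_nonneg δ
        nlinarith
      have h3 : 1 - |δ| ≤ Real.sqrt (1 + δ) := by
        have h4 := Real.sqrt_le_sqrt h2
        rwa [Real.sqrt_sq (by linarith)] at h4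
      linarith
  · have h2 : 1 + δ ≤ (1 + |δ|) ^ 2 := by
      have := le_abs_self δ; have := abs_nonneg δ; nlinarith
    have h3 : Real.sqrt (1 + δ) ≤ 1 + |δ| := by
      have h4 := Real.sqrt_le_sqrt h2
      rwa [Real.sqrt_sq (by have := abs_nonneg δ; linarith)] at h4
    linarith


lemma key_est {E : Type*} [NormedAddCommGroup E] [InnerProductSpace ℝ E] (m : ℕ) (g : E → ℝ)
    (hgc : Continuous g) (K M : ℝ) (hK : 0 ≤ K) (hM0 : 0 ≤ M)
    (hg : ∀ u v : E, |g u - g v| ≤ K * ‖u - v‖) (hM : ∀ u : E, ‖u‖ ≤ 2 → |g u| ≤ M)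
    (w : E) (hw : ‖w‖ = 1) (R a s : ℝ) (hs : 0 ≤ s) (hs2 : s ≤ 1/2)
    (hR1 : |R - 1| ≤ 2*s) (hRa : |R - 1 - a| ≤ s^2) :
    |(∫ r in (1:ℝ)..R, r^m * g (r • w)) - g w * a| ≤ (4*(K + M*m)*2^m + M) * s^2 := by
  have habs := abs_nonneg (R - 1)
  have hcont : Continuous (fun r : ℝ => r ^ m * g (r • w)) := by fun_prop
  have hii : IntervalIntegrable (fun r : ℝ => r ^ m * g (r • w)) volume 1 R :=
    hcont.intervalIntegrable 1 R
  have hgw : |g w| ≤ M := hM w (by rw [hw]; norm_num)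
  -- step 1 : subtract the constant
  have e1 : (∫ r in (1:ℝ)..R, r ^ m * g (r • w)) - g w * (R - 1)
      = ∫ r in (1:ℝ)..R, (r ^ m * g (r • w) - g w) := by
    rw [intervalIntegral.integral_sub hii (intervalIntegrable_const)]
    rw [intervalIntegral.integral_const]
    ring_nf
  -- step 2 : pointwise bound on uIoc
  have hbd : ∀ r ∈ Set.uIoc (1:ℝ) R, ‖r ^ m * g (r • w) - g w‖ ≤ (K + M*m) * 2^m * (2*s) := by
    intro r hr
    have hr' : min 1 R < r ∧ r ≤ max 1 R := by
      simpa [Set.uIoc, Set.mem_Ioc] using hr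
    have h7 : R - 1 ≤ |R - 1| := le_abs_self _
    have h8 : -|R - 1| ≤ R - 1 := neg_abs_le _
    have hmax : max 1 R ≤ 1 + |R - 1| := max_le (by linarith) (by linarith)
    have hmin : 1 - |R - 1| ≤ min 1 R := le_min (by linarith) (by linarith)
    have hr1 : |r - 1| ≤ |R - 1| := abs_le.2 ⟨by linarith [hr'.1, hr'.2], by linarith [hr'.1, hr'.2]⟩
    have hr0 : 0 ≤ r := by linarith [hr'.1]
    have hr2 : r ≤ 2 := by linarith [hr'.2]
    have hrm : |r ^ m| ≤ 2 ^ m := by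
      rw [abs_of_nonneg (pow_nonneg hr0 m)]
      exact pow_le_pow_left₀ hr0 hr2 m
    have hsplit : r ^ m * g (r • w) - g w = r ^ m * (g (r • w) - g w) + g w * (r ^ m - 1) := by
      ring
    rw [Real.norm_eq_abs, hsplit]
    have hgd : |g (r • w) - g w| ≤ K * |r - 1| := by
      have h9 := hg (r • w) w
      have h10 : ‖r • w - w‖ = |r - 1| := by
        have : r • w - w = (r - 1) • w := by module
        rw [this, norm_smul, hw, Real.norm_eq_abs, mul_one]
      rwa [h10] at h9
    have hpe := pow_est m hr0 hr2
    calc |r ^ m * (g (r • w) - g w) + g w * (r ^ m - 1)|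
        ≤ |r ^ m| * |g (r • w) - g w| + |g w| * |r ^ m - 1| := by
          refine (abs_add_le _ _).trans ?_
          rw [abs_mul, abs_mul]
      _ ≤ 2 ^ m * (K * |r - 1|) + M * (m * 2 ^ m * |r - 1|) :=
          add_le_add (mul_le_mul hrm hgd (abs_nonneg _) (by positivity))
            (mul_le_mul hgw hpe (abs_nonneg _) hM0)
      _ = (K + M * m) * 2 ^ m * |r - 1| := by ring
      _ ≤ (K + M * m) * 2 ^ m * (2 * s) := by
          have : (0:ℝ) ≤ (K + M * m) * 2 ^ m := by positivity
          exact mul_le_mul_of_nonneg_left (hr1.trans hR1) this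
  have e2 : ‖∫ r in (1:ℝ)..R, (r ^ m * g (r • w) - g w)‖ ≤ (K + M*m) * 2^m * (2*s) * |R - 1| :=
    intervalIntegral.norm_integral_le_of_norm_le_const hbd
  rw [Real.norm_eq_abs] at e2
  have e3 : |(∫ r in (1:ℝ)..R, r ^ m * g (r • w)) - g w * a|
      ≤ |(∫ r in (1:ℝ)..R, r ^ m * g (r • w)) - g w * (R - 1)| + |g w * (R - 1 - a)| := by
    have : (∫ r in (1:ℝ)..R, r ^ m * g (r • w)) - g w * a
        = ((∫ r in (1:ℝ)..R, r ^ m * g (r • w)) - g w * (R - 1)) + g w * (R - 1 - a) := by ring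
    rw [this]; exact abs_add_le _ _
  rw [e1] at e3
  have e4 : |g w * (R - 1 - a)| ≤ M * s^2 := by
    rw [abs_mul]
    exact mul_le_mul hgw hRa (abs_nonneg _) hM0
  have e5 : (K + M*m) * 2^m * (2*s) * |R - 1| ≤ (K + M*m) * 2^m * (2*s) * (2*s) := by
    have : (0:ℝ) ≤ (K + M * m) * 2 ^ m * (2*s) := by positivity
    exact mul_le_mul_of_nonneg_left hR1 this
  have : (K + M*m) * 2^m * (2*s) * (2*s) = 4*(K + M*m)*2^m * s^2 := by ring
  linarith [e2.trans (e5.trans_eq this), e3, e4]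


section RfSection
variable {E : Type*} [NormedAddCommGroup E] [InnerProductSpace ℝ E]

/-- Radius at which the ray through `w` exits `closedBall t 1`. -/
noncomputable def Rf (w t : E) : ℝ :=
  ⟪w, t⟫ + Real.sqrt (1 - ‖t‖^2 + ⟪w, t⟫^2)

section RfLemmas
variable {w t : E} (hw : ‖w‖ = 1) (ht : ‖t‖ ≤ 1)
include hw ht

lemma abs_inner_le : |⟪w, t⟫| ≤ ‖t‖ := by
  have := abs_real_inner_le_norm w t
  rwa [hw, one_mul] at this

lemma q_nonneg : 0 ≤ 1 - ‖t‖^2 + ⟪w, t⟫^2 := by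
  have h1 : ‖t‖^2 ≤ 1 := by nlinarith [norm_nonneg t]
  nlinarith [sq_nonneg (⟪w, t⟫)]

lemma sqrt_ge_abs_inner : |⟪w, t⟫| ≤ Real.sqrt (1 - ‖t‖^2 + ⟪w, t⟫^2) := by
  have h1 : ⟪w, t⟫^2 ≤ 1 - ‖t‖^2 + ⟪w, t⟫^2 := by nlinarith [norm_nonneg t]
  calc |⟪w, t⟫| = Real.sqrt (⟪w, t⟫^2) := (Real.sqrt_sq_eq_abs _).symm
    _ ≤ _ := Real.sqrt_le_sqrt h1

lemma Rf_nonneg : 0 ≤ Rf w t := by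
  have := sqrt_ge_abs_inner hw ht
  have := neg_abs_le (⟪w, t⟫)
  unfold Rf; linarith

lemma Rf_sub_one_sub : |Rf w t - 1 - ⟪w, t⟫| ≤ ‖t‖^2 := by
  have ha := abs_inner_le hw ht
  have hδ1 : -1 ≤ ⟪w, t⟫^2 - ‖t‖^2 := by nlinarith [sq_nonneg (⟪w, t⟫), norm_nonneg t]
  have h1 : (1:ℝ) - ‖t‖^2 + ⟪w, t⟫^2 = 1 + (⟪w, t⟫^2 - ‖t‖^2) := by ring
  have h2 := sqrt_one_add_sub_one hδ1
  have h3 : |⟪w, t⟫^2 - ‖t‖^2| ≤ ‖t‖^2 := by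
    rw [abs_le]; constructor
    · nlinarith [sq_nonneg (⟪w, t⟫)]
    · nlinarith [abs_nonneg (⟪w, t⟫), sq_abs (⟪w, t⟫)]
  have : Rf w t - 1 - ⟪w, t⟫ = Real.sqrt (1 + (⟪w, t⟫^2 - ‖t‖^2)) - 1 := by
    unfold Rf; rw [← h1]; ring
  rw [this]
  exact h2.trans h3

lemma Rf_sub_one : |Rf w t - 1| ≤ 2 * ‖t‖ := by
  have h1 := Rf_sub_one_sub hw ht
  have h2 := abs_inner_le hw ht
  have h3 : |Rf w t - 1| ≤ |Rf w t - 1 - ⟪w, t⟫| + |(⟪w, t⟫ : ℝ)| := by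
    have h5 := abs_add_le (Rf w t - 1 - ⟪w, t⟫) (⟪w, t⟫ : ℝ)
    have h6 : Rf w t - 1 - ⟪w, t⟫ + ⟪w, t⟫ = Rf w t - 1 := by ring
    rwa [h6] at h5
  have h4 : ‖t‖^2 ≤ ‖t‖ := by nlinarith [norm_nonneg t]
  linarith

lemma smul_mem_closedBall_iff {r : ℝ} (hr : 0 < r) :
    r • w ∈ closedBall t 1 ↔ r ≤ Rf w t := by
  have hq := q_nonneg hw ht
  have hsq := Real.sq_sqrt hq
  have hsnn := Real.sqrt_nonneg (1 - ‖t‖^2 + ⟪w, t⟫^2)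
  have hge := sqrt_ge_abs_inner hw ht
  have hnegabs := neg_abs_le (⟪w, t⟫)
  have hle := le_abs_self (⟪w, t⟫)
  have hnorm2 : ‖r • w - t‖^2 = r^2 - 2*r*⟪w, t⟫ + ‖t‖^2 := by
    rw [norm_sub_sq_real, norm_smul, real_inner_smul_left, hw]
    rw [Real.norm_eq_abs, abs_of_pos hr]
    ring
  rw [mem_closedBall_iff_norm]
  constructor
  · intro h
    have h2 : ‖r • w - t‖^2 ≤ 1 := by nlinarith [norm_nonneg (r • w - t)]
    rw [hnorm2] at h2
    unfold Rf
    nlinarith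
  · intro h
    have h2 : ‖r • w - t‖^2 ≤ 1 := by
      rw [hnorm2]
      unfold Rf at h
      nlinarith
    nlinarith [norm_nonneg (r • w - t)]

end RfLemmas

lemma Rf_zero (w : E) (hw : ‖w‖ = 1) : Rf w 0 = 1 := by
  unfold Rf
  simp [Real.sqrt_one]

end RfSection


section Euclid
variable {n : ℕ} [NeZero n]
local notation "Eu" => EuclideanSpace ℝ (Fin n)

lemma mp_eu : MeasurePreserving (homeomorphUnitSphereProd Eu)
    ((volume : Measure Eu).comap Subtype.val)
    (((volume : Measure Eu).toSphere).prod (.volumeIoiPow (n-1))) := by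
  have h := (volume : Measure Eu).measurePreserving_homeomorphUnitSphereProd
  rwa [finrank_euclideanSpace_fin] at h

lemma polar_repr {g : Eu → ℝ} (hgc : Continuous g) {t : Eu} (ht : ‖t‖ ≤ 1) :
    (∫ u in closedBall t 1, g u) =
      (∫ w : sphere (0 : Eu) 1,
        (∫ r in (0:ℝ)..(Rf (w : Eu) t), r ^ (n-1) * g (r • (w : Eu)))
        ∂((volume : Measure Eu).toSphere)) ∧
    Integrable (fun w : sphere (0 : Eu) 1 =>
        ∫ r in (0:ℝ)..(Rf (w : Eu) t), r ^ (n-1) * g (r • (w : Eu)))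
      ((volume : Measure Eu).toSphere) := by
  set B := closedBall t 1 with hB
  have hBm : MeasurableSet B := measurableSet_closedBall
  have hInd : Integrable (B.indicator g) volume := by
    rw [integrable_indicator_iff hBm]
    exact hgc.continuousOn.integrableOn_compact (isCompact_closedBall t 1)
  have h0c : MeasurableSet ({(0:Eu)}ᶜ) := (measurableSet_singleton _).compl
  have hmp := mp_eu (n := n)
  set φ := homeomorphUnitSphereProd Eu with hφ
  set F : sphere (0:Eu) 1 × Ioi (0:ℝ) → ℝ :=
    fun p => B.indicator g ((p.2 : ℝ) • (p.1 : Eu)) with hF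
  have hcomp : ∀ x : ({(0:Eu)}ᶜ : Set Eu), F (φ x) = B.indicator g x := by
    intro x
    have h1 : ((φ.symm (φ x)) : Eu) = ((φ x).2 : ℝ) • ((φ x).1 : Eu) :=
      homeomorphUnitSphereProd_symm_apply_coe Eu _
    rw [φ.symm_apply_apply] at h1
    simp only [hF, ← h1]
  have hFint : Integrable F (((volume : Measure Eu).toSphere).prod (.volumeIoiPow (n-1))) := by
    rw [← hmp.integrable_comp_emb (Homeomorph.measurableEmbedding φ)]
    have h2 : (F ∘ φ) = fun x : ({(0:Eu)}ᶜ : Set Eu) => B.indicator g x := funext hcomp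
    rw [h2]
    have h1 : Integrable (B.indicator g)
        (((volume : Measure Eu).comap (Subtype.val : ({(0:Eu)}ᶜ : Set Eu) → Eu)).map Subtype.val) := by
      rw [map_comap_subtype_coe h0c]
      exact hInd.restrict
    exact ((MeasurableEmbedding.subtype_coe h0c).integrable_map_iff).1 h1
  have inner_eq : ∀ w : sphere (0:Eu) 1,
      (∫ r : Ioi (0:ℝ), F (w, r) ∂(Measure.volumeIoiPow (n-1)))
        = ∫ r in (0:ℝ)..(Rf (w : Eu) t), r ^ (n-1) * g (r • (w : Eu)) := by
    intro w
    have hw : ‖(w:Eu)‖ = 1 := mem_sphere_zero_iff_norm.1 w.2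
    have hR0 : 0 ≤ Rf (w:Eu) t := Rf_nonneg hw ht
    rw [Measure.volumeIoiPow]
    simp only [ENNReal.ofReal]
    rw [integral_withDensity_eq_integral_smul
      ((measurable_subtype_coe.pow_const _).real_toNNReal) _]
    rw [integral_subtype_comap measurableSet_Ioi
      (fun r : ℝ => (r ^ (n-1)).toNNReal • B.indicator g (r • (w:Eu)))]
    rw [setIntegral_congr_fun measurableSet_Ioi
      (g := fun r : ℝ => (Set.Ioc (0:ℝ) (Rf (w:Eu) t)).indicator
        (fun r => r ^ (n-1) * g (r • (w:Eu))) r) ?_]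
    · rw [setIntegral_eq_integral_of_forall_compl_eq_zero ?_]
      · rw [MeasureTheory.integral_indicator measurableSet_Ioc]
        rw [intervalIntegral.integral_of_le hR0]
      · intro r hr
        rw [Set.indicator_apply_eq_zero]
        intro hr2
        exact absurd hr2.1 (by simpa using hr)
    · intro r hr
      have hrpos : (0:ℝ) < r := hr
      by_cases hmem : r • (w:Eu) ∈ B
      · have hle : r ≤ Rf (w:Eu) t := (smul_mem_closedBall_iff hw ht hrpos).1 hmem
        simp only [Set.indicator_of_mem hmem, Set.indicator_of_mem (Set.mem_Ioc.2 ⟨hrpos, hle⟩),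
          NNReal.smul_def, Real.coe_toNNReal _ (pow_nonneg hrpos.le _), smul_eq_mul]
      · have hgt : ¬ (r ≤ Rf (w:Eu) t) := fun h =>
          hmem ((smul_mem_closedBall_iff hw ht hrpos).2 h)
        simp only [Set.indicator_of_notMem hmem, Set.indicator_of_notMem
          (fun h => hgt (Set.mem_Ioc.1 h).2), smul_zero]
  constructor
  · calc ∫ u in B, g u = ∫ u, B.indicator g u := (MeasureTheory.integral_indicator hBm).symm
      _ = ∫ u in ({(0:Eu)}ᶜ), B.indicator g u := by
          rw [restrict_compl_singleton]
      _ = ∫ x : ({(0:Eu)}ᶜ : Set Eu), B.indicator g x ∂(volume.comap Subtype.val) :=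
          (integral_subtype_comap h0c _).symm
      _ = ∫ x : ({(0:Eu)}ᶜ : Set Eu), F (φ x) ∂(volume.comap Subtype.val) :=
          integral_congr_ae (Filter.Eventually.of_forall fun x => (hcomp x).symm)
      _ = ∫ p, F p ∂(((volume : Measure Eu).toSphere).prod (.volumeIoiPow (n-1))) :=
          hmp.integral_comp (Homeomorph.measurableEmbedding φ) F
      _ = ∫ w, ∫ r, F (w, r) ∂(Measure.volumeIoiPow (n-1)) ∂(volume : Measure Eu).toSphere :=
          integral_prod F hFint
      _ = _ := integral_congr_ae (Filter.Eventually.of_forall fun w => inner_eq w)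
  · exact (hFint.integral_prod_left).congr (Filter.Eventually.of_forall fun w => inner_eq w)


lemma cont_integrable_sphere (h : sphere (0:Eu) 1 → ℝ) (hc : Continuous h) :
    Integrable h ((volume : Measure Eu).toSphere) :=
  hc.integrable_of_hasCompactSupport (HasCompactSupport.of_compactSpace h)

lemma cont_integrable_sphere' (h : sphere (0:Eu) 1 → Eu) (hc : Continuous h) :
    Integrable h ((volume : Measure Eu).toSphere) :=
  hc.integrable_of_hasCompactSupport (HasCompactSupport.of_compactSpace h)

set_option maxHeartbeats 1000000 in
lemma oneSided (f : Eu → ℝ) (L : ℝ≥0) (hf : LipschitzWith L f)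
    (μ : ℝ) (hμ : 0 < μ) (x : Eu) :
    HasGradientAt (fun z => ∫ u, f (z + μ • u) ∂(unifBall n))
      ((μ * (volume (ball (0:Eu) 1)).toReal)⁻¹ •
        ∫ w : sphere (0:Eu) 1, f (x + μ • (w:Eu)) • (w:Eu)
          ∂((volume : Measure Eu).toSphere)) x := by
  have hnontriv : Nontrivial Eu := inferInstance
  set σ := (volume : Measure Eu).toSphere with hσ
  set g : Eu → ℝ := fun u => f (x + μ • u) with hg
  have hgc : Continuous g := hf.continuous.comp (by fun_prop)
  set K : ℝ := (L:ℝ) * μ with hKdef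
  have hK : 0 ≤ K := mul_nonneg L.coe_nonneg hμ.le
  have hgl : ∀ u v : Eu, |g u - g v| ≤ K * ‖u - v‖ := by
    intro u v
    have h1 : dist (g u) (g v) ≤ L * dist (x + μ • u) (x + μ • v) := hf.dist_le_mul _ _
    rw [Real.dist_eq] at h1
    have h2 : dist (x + μ • u) (x + μ • v) = μ * ‖u - v‖ := by
      rw [dist_eq_norm]
      have : x + μ • u - (x + μ • v) = μ • (u - v) := by module
      rw [this, norm_smul, Real.norm_eq_abs, abs_of_pos hμ]
    rw [h2] at h1
    calc |g u - g v| ≤ L * (μ * ‖u - v‖) := h1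
      _ = K * ‖u - v‖ := by rw [hKdef]; ring
  set M : ℝ := |f x| + 2*K with hMdef
  have hM0 : 0 ≤ M := by positivity
  have hM : ∀ u : Eu, ‖u‖ ≤ 2 → |g u| ≤ M := by
    intro u hu
    have h0 : g 0 = f x := by simp [hg]
    have h1 := hgl u 0
    rw [h0, sub_zero] at h1
    have h2 : |g u| ≤ |g u - f x| + |f x| := by
      have := abs_add_le (g u - f x) (f x); simpa using this
    have h3 : K * ‖u‖ ≤ K * 2 := by nlinarith
    rw [hMdef]; linarith
  set V : ℝ := (volume (ball (0:Eu) 1)).toReal with hVdef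
  have hV : 0 < V := ENNReal.toReal_pos (measure_ball_pos volume 0 one_pos).ne'
    measure_ball_lt_top.ne
  have hcB : (volume (closedBall (0:Eu) 1))⁻¹.toReal = V⁻¹ := by
    rw [Measure.addHaar_closedBall_eq_addHaar_ball, ENNReal.toReal_inv]
  set A : Eu → sphere (0:Eu) 1 → ℝ :=
    fun t w => ∫ r in (0:ℝ)..(Rf (w : Eu) t), r ^ (n-1) * g (r • (w : Eu)) with hA
  -- Ball-average as sphere integral
  have hFz : ∀ t : Eu, ‖t‖ ≤ 1 →
      (∫ u, f ((x + μ • t) + μ • u) ∂(unifBall n)) = V⁻¹ * ∫ w, A t w ∂σ := by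
    intro t ht
    have step1 : (∫ u, f ((x + μ • t) + μ • u) ∂(unifBall n))
        = V⁻¹ * ∫ u in closedBall (0:Eu) 1, g (u + t) := by
      rw [unifBall, MeasureTheory.integral_smul_measure, hcB, smul_eq_mul]
      congr 1
      refine setIntegral_congr_fun measurableSet_closedBall (fun u _ => ?_)
      show f ((x + μ • t) + μ • u) = f (x + μ • (u + t))
      congr 1
      module
    have step2 : ∫ u in closedBall (0:Eu) 1, g (u + t) = ∫ u in closedBall t 1, g u := by
      rw [← MeasureTheory.integral_indicator (measurableSet_closedBall (x := t) (ε := 1)),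
        ← integral_add_right_eq_self ((closedBall t 1).indicator g) t,
        ← MeasureTheory.integral_indicator (measurableSet_closedBall (x := (0:Eu)) (ε := 1))]
      congr 1
      funext u
      by_cases hu : u ∈ closedBall (0:Eu) 1
      · have hu' : u + t ∈ closedBall t 1 := by
          rw [mem_closedBall_iff_norm] at hu ⊢
          simpa using hu
        rw [Set.indicator_of_mem hu', Set.indicator_of_mem hu]
      · have hu' : u + t ∉ closedBall t 1 := by
          rw [mem_closedBall_iff_norm] at hu ⊢
          simpa using hu
        rw [Set.indicator_of_notMem hu', Set.indicator_of_notMem hu]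
    rw [step1, step2, (polar_repr hgc ht).1]
  have IntA : ∀ t : Eu, ‖t‖ ≤ 1 → Integrable (A t) σ := fun t ht => (polar_repr hgc ht).2
  -- the candidate gradient
  set G : Eu := (μ * V)⁻¹ • ∫ w : sphere (0:Eu) 1, f (x + μ • (w:Eu)) • (w:Eu) ∂σ with hG
  have hGg : G = (μ * V)⁻¹ • ∫ w : sphere (0:Eu) 1, g (w:Eu) • (w:Eu) ∂σ := by
    rw [hG]
  have hIntgw : Integrable (fun w : sphere (0:Eu) 1 => g (w:Eu) • (w:Eu)) σ :=
    cont_integrable_sphere' _ ((hgc.comp continuous_subtype_val).smul continuous_subtype_val)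
  have hlin : ∀ v : Eu, (InnerProductSpace.toDual ℝ Eu) G v
      = V⁻¹ * ∫ w : sphere (0:Eu) 1, g (w:Eu) * ⟪(w:Eu), μ⁻¹ • v⟫ ∂σ := by
    intro v
    rw [InnerProductSpace.toDual_apply_apply, hGg, real_inner_smul_left]
    have h1 : ⟪∫ w : sphere (0:Eu) 1, g (w:Eu) • (w:Eu) ∂σ, v⟫
        = ∫ w : sphere (0:Eu) 1, g (w:Eu) * ⟪(w:Eu), v⟫ ∂σ := by
      rw [real_inner_comm, ← integral_inner hIntgw v]
      refine integral_congr_ae (Filter.Eventually.of_forall fun w => ?_)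
      simp only [real_inner_smul_right]
      rw [real_inner_comm]
    rw [h1]
    have h2 : ∀ w : sphere (0:Eu) 1, g (w:Eu) * ⟪(w:Eu), μ⁻¹ • v⟫
        = μ⁻¹ * (g (w:Eu) * ⟪(w:Eu), v⟫) := by
      intro w; rw [real_inner_smul_right]; ring
    simp_rw [h2]
    rw [MeasureTheory.integral_const_mul]
    rw [mul_inv]
    ring
  -- main quantitative estimate
  set C : ℝ := 4*(K + M*((n-1 : ℕ) : ℝ))*(2:ℝ)^((n-1 : ℕ)) + M with hC
  have hC0 : 0 ≤ C := by rw [hC]; positivity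
  have hEst : ∀ t : Eu, ‖t‖ ≤ 1/2 → ∀ w : sphere (0:Eu) 1,
      |A t w - A 0 w - g (w:Eu) * ⟪(w:Eu), t⟫| ≤ C * ‖t‖^2 := by
    intro t ht w
    have hw : ‖(w:Eu)‖ = 1 := mem_sphere_zero_iff_norm.1 w.2
    have ht1 : ‖t‖ ≤ 1 := ht.trans (by norm_num)
    have hA0 : A 0 w = ∫ r in (0:ℝ)..1, r ^ (n-1) * g (r • (w:Eu)) := by
      simp only [hA, Rf_zero (w:Eu) hw]
    have hcont : Continuous (fun r : ℝ => r ^ (n-1) * g (r • (w:Eu))) := by fun_prop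
    have hsub : A t w - A 0 w = ∫ r in (1:ℝ)..(Rf (w:Eu) t), r ^ (n-1) * g (r • (w:Eu)) := by
      rw [hA0, hA]
      exact intervalIntegral.integral_interval_sub_left
        (hcont.intervalIntegrable _ _) (hcont.intervalIntegrable _ _)
    rw [hsub]
    exact key_est (n-1) g hgc K M hK hM0 hgl hM (w:Eu) hw (Rf (w:Eu) t) ⟪(w:Eu), t⟫ ‖t‖
      (norm_nonneg t) ht (Rf_sub_one hw ht1) (Rf_sub_one_sub hw ht1)
  -- assemble HasFDerivAt
  have hgoal : HasGradientAt (fun z => ∫ u, f (z + μ • u) ∂(unifBall n)) G x := by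
    rw [hasGradientAt_iff_hasFDerivAt, hasFDerivAt_iff_isLittleO_nhds_zero]
    set S : ℝ := (σ Set.univ).toReal with hS
    have hS0 : 0 ≤ S := ENNReal.toReal_nonneg
    set D : ℝ := V⁻¹ * (C * S) * (μ⁻¹)^2 with hD
    have hD0 : 0 ≤ D := by
      rw [hD]
      exact mul_nonneg (mul_nonneg (inv_nonneg.2 hV.le) (mul_nonneg hC0 hS0)) (sq_nonneg _)
    rw [Asymptotics.isLittleO_iff]
    intro c hc
    have hball : Metric.ball (0:Eu) (min (μ/2) (c/(D+1))) ∈ nhds (0:Eu) :=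
      Metric.ball_mem_nhds _ (lt_min (by linarith) (div_pos hc (by linarith)))
    filter_upwards [hball] with v hv
    rw [mem_ball_zero_iff] at hv
    have hv1 : ‖v‖ ≤ μ/2 := le_of_lt (lt_of_lt_of_le hv (min_le_left _ _))
    have hv2 : ‖v‖ ≤ c/(D+1) := le_of_lt (lt_of_lt_of_le hv (min_le_right _ _))
    set t : Eu := μ⁻¹ • v with htdef
    have htn : ‖t‖ = μ⁻¹ * ‖v‖ := by
      rw [htdef, norm_smul, Real.norm_eq_abs, abs_of_pos (inv_pos.2 hμ)]
    have ht2 : ‖t‖ ≤ 1/2 := by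
      rw [htn]
      rw [inv_mul_le_iff₀ hμ]
      linarith
    have ht1 : ‖t‖ ≤ 1 := ht2.trans (by norm_num)
    have hxv : x + μ • t = x + v := by
      rw [htdef, smul_inv_smul₀ hμ.ne']
    have hx0 : x + μ • (0:Eu) = x := by simp
    have e1 : (∫ u, f ((x + v) + μ • u) ∂(unifBall n)) = V⁻¹ * ∫ w, A t w ∂σ := by
      rw [← hxv]; exact hFz t ht1
    have e2 : (∫ u, f (x + μ • u) ∂(unifBall n)) = V⁻¹ * ∫ w, A 0 w ∂σ := by
      have := hFz 0 (by simp)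
      rwa [hx0] at this
    have hIntB : Integrable (fun w : sphere (0:Eu) 1 => g (w:Eu) * ⟪(w:Eu), t⟫) σ :=
      cont_integrable_sphere _ ((hgc.comp continuous_subtype_val).mul
        (continuous_subtype_val.inner continuous_const))
    have e3 : (∫ w, (A t w - A 0 w - g (w:Eu) * ⟪(w:Eu), t⟫) ∂σ)
        = (∫ w, A t w ∂σ) - (∫ w, A 0 w ∂σ) - (∫ w, g (w:Eu) * ⟪(w:Eu), t⟫ ∂σ) := by
      have hAtA0 : Integrable (fun w : sphere (0:Eu) 1 => A t w - A 0 w) σ :=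
        (IntA t ht1).sub (IntA 0 (by simp))
      rw [integral_sub hAtA0 hIntB, integral_sub (IntA t ht1) (IntA 0 (by simp))]
    have e4 : ‖∫ w, (A t w - A 0 w - g (w:Eu) * ⟪(w:Eu), t⟫) ∂σ‖ ≤ C * ‖t‖^2 * S := by
      exact norm_integral_le_of_norm_le_const
        (Filter.Eventually.of_forall fun w => by
          rw [Real.norm_eq_abs]; exact hEst t ht2 w)
    -- final computation
    have hlinv := hlin v
    have e5 : (∫ u, f ((x+v) + μ • u) ∂(unifBall n)) - (∫ u, f (x + μ • u) ∂(unifBall n))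
        - (InnerProductSpace.toDual ℝ Eu) G v
        = V⁻¹ * ((∫ w, A t w ∂σ) - (∫ w, A 0 w ∂σ) - (∫ w, g (w:Eu) * ⟪(w:Eu), t⟫ ∂σ)) := by
      rw [e1, e2, hlinv]
      ring
    rw [e5, ← e3]
    rw [norm_mul, Real.norm_eq_abs, abs_of_pos (inv_pos.2 hV)]
    calc V⁻¹ * ‖∫ w, (A t w - A 0 w - g (w:Eu) * ⟪(w:Eu), t⟫) ∂σ‖
        ≤ V⁻¹ * (C * ‖t‖^2 * S) := by
          exact mul_le_mul_of_nonneg_left e4 (inv_pos.2 hV).le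
      _ = D * ‖v‖^2 := by
          rw [hD, htn]; ring
      _ ≤ c * ‖v‖ := by
          have hvn : 0 ≤ ‖v‖ := norm_nonneg v
          have hDc : ‖v‖ * (D+1) ≤ c := by
            rw [le_div_iff₀ (by linarith : (0:ℝ) < D+1)] at hv2
            exact hv2
          nlinarith [mul_le_mul_of_nonneg_left hDc hvn, sq_nonneg ‖v‖]
  -- identify G with the stated vector
  exact hgoal

lemma unifBall_neg (h : Eu → ℝ) :
    ∫ u, h (-u) ∂(unifBall n) = ∫ u, h u ∂(unifBall n) := by
  rw [unifBall, MeasureTheory.integral_smul_measure, MeasureTheory.integral_smul_measure]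
  congr 1
  set e := MeasurableEquiv.neg Eu with he
  set m := (volume : Measure Eu).restrict (closedBall 0 1) with hm
  have hcoe : ⇑e = fun u : Eu => -u := rfl
  have h2 : ∫ y, h y ∂(m.map e) = ∫ x, h (-x) ∂m := by
    rw [e.measurableEmbedding.integral_map]
    simp only [hcoe]
  have h1 : m.map e = m := by
    have hmap : (volume : Measure Eu).map e = volume := by
      have h3 := Measure.map_neg_eq_self (volume : Measure Eu)
      rw [he]
      exact h3
    have hpre : e ⁻¹' (closedBall (0:Eu) 1) = closedBall 0 1 := by
      ext u
      simp [hcoe, mem_closedBall_iff_norm]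
    calc m.map e = ((volume : Measure Eu).restrict (e ⁻¹' (closedBall 0 1))).map e := by
          rw [hpre]
      _ = ((volume : Measure Eu).map e).restrict (closedBall 0 1) :=
          (MeasurableEquiv.restrict_map e volume (closedBall 0 1)).symm
      _ = m := by rw [hmap]
  rw [← h2, h1]

theorem smoothing_gradient_symmetric' (f : Eu → ℝ) (L : ℝ≥0)
    (hf : LipschitzWith L f) (μ : ℝ) (hμ : 0 < μ) (x : Eu) :
    gradient (fun z => ∫ u, f (z + μ • u) ∂(unifBall n)) x =
      ((n : ℝ) / (2 * μ)) •
        ∫ w, (f (x + μ • w) - f (x - μ • w)) • w ∂(unifSphere n) := by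
  set σ := (volume : Measure Eu).toSphere with hσ
  set V : ℝ := (volume (ball (0:Eu) 1)).toReal with hV
  have hV0 : 0 < V := ENNReal.toReal_pos (measure_ball_pos volume 0 one_pos).ne'
    measure_ball_lt_top.ne
  set Ip : Eu := ∫ w : sphere (0:Eu) 1, f (x + μ • (w:Eu)) • (w:Eu) ∂σ with hIp
  set Im : Eu := ∫ w : sphere (0:Eu) 1, f (x - μ • (w:Eu)) • (w:Eu) ∂σ with hIm
  have h1 := oneSided f L hf μ hμ x
  rw [← hV] at h1
  -- the reflected function
  set f2 : Eu → ℝ := fun y => f ((2:ℝ) • x - y) with hf2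
  have hf2l : LipschitzWith L f2 := by
    have hsub : LipschitzWith 1 (fun y : Eu => (2:ℝ) • x - y) :=
      LipschitzWith.of_dist_le_mul fun y z => by
        rw [dist_sub_left, NNReal.coe_one, one_mul]
    have := hf.comp hsub; rw [mul_one] at this; exact this
  have h2 := oneSided f2 L hf2l μ hμ x
  have hIm2 : (∫ w : sphere (0:Eu) 1, f2 (x + μ • (w:Eu)) • (w:Eu) ∂σ) = Im := by
    rw [hIm]
    refine integral_congr_ae (Filter.Eventually.of_forall fun w => ?_)
    have : (2:ℝ) • x - (x + μ • (w:Eu)) = x - μ • (w:Eu) := by module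
    simp only [hf2, this]
  rw [hIm2] at h2
  -- F2 = F ∘ (2x - ·)
  have hF2 : (fun z => ∫ u, f2 (z + μ • u) ∂(unifBall n))
      = fun z => (fun z' => ∫ u, f (z' + μ • u) ∂(unifBall n)) ((2:ℝ) • x - z) := by
    funext z
    show (∫ u, f2 (z + μ • u) ∂(unifBall n)) = ∫ u, f (((2:ℝ) • x - z) + μ • u) ∂(unifBall n)
    rw [← unifBall_neg (fun u => f (((2:ℝ) • x - z) + μ • u))]
    refine integral_congr_ae (Filter.Eventually.of_forall fun u => ?_)
    show f ((2:ℝ) • x - (z + μ • u)) = f (((2:ℝ) • x - z) + μ • (-u))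
    congr 1
    module
  rw [hF2] at h2
  -- chain rule: gradient of z ↦ F(2x - z) at x is -grad F x
  have h3 : HasGradientAt
      (fun z => (fun z' => ∫ u, f (z' + μ • u) ∂(unifBall n)) ((2:ℝ) • x - z))
      (-((μ * V)⁻¹ • Ip)) x := by
    rw [hasGradientAt_iff_hasFDerivAt]
    have hFd := hasGradientAt_iff_hasFDerivAt.1 h1
    have hinner : HasFDerivAt (fun z : Eu => (2:ℝ) • x - z)
        (-(ContinuousLinearMap.id ℝ Eu)) x := (hasFDerivAt_id x).const_sub _
    have he : (2:ℝ) • x - x = x := by module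
    have hFd' : HasFDerivAt (fun z' => ∫ u, f (z' + μ • u) ∂(unifBall n))
        (InnerProductSpace.toDual ℝ Eu ((μ * V)⁻¹ • Ip)) ((fun z : Eu => (2:ℝ) • x - z) x) := by
      simpa [he] using hFd
    have hcomp := hFd'.comp x hinner
    have heq : (InnerProductSpace.toDual ℝ Eu ((μ * V)⁻¹ • Ip)).comp
        (-(ContinuousLinearMap.id ℝ Eu))
        = InnerProductSpace.toDual ℝ Eu (-((μ * V)⁻¹ • Ip)) := by
      ext v
      simp only [ContinuousLinearMap.comp_apply, ContinuousLinearMap.neg_apply,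
        ContinuousLinearMap.id_apply, map_neg, ContinuousLinearMap.neg_apply]
    rw [← heq]
    exact hcomp
  have h4 : (μ * V)⁻¹ • Im = -((μ * V)⁻¹ • Ip) := by
    have hu := (hasGradientAt_iff_hasFDerivAt.1 h2).unique (hasGradientAt_iff_hasFDerivAt.1 h3)
    exact (InnerProductSpace.toDual ℝ Eu).injective (by rw [hu, map_neg])
  have h5 : Im = -Ip := by
    have hne : ((μ * V)⁻¹ : ℝ) ≠ 0 := inv_ne_zero (by positivity)
    have h6 := h4
    rw [← smul_neg] at h6
    exact smul_right_injective _ hne h6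
  -- compute the RHS
  have hsm : MeasurableSet (sphere (0:Eu) 1) := isClosed_sphere.measurableSet
  have hRHS : (∫ w, (f (x + μ • w) - f (x - μ • w)) • w ∂(unifSphere n))
      = ((σ Set.univ).toReal)⁻¹ • (Ip - Im) := by
    rw [unifSphere, MeasureTheory.integral_smul_measure, ENNReal.toReal_inv]
    congr 1
    rw [(MeasurableEmbedding.subtype_coe hsm).integral_map]
    rw [hIp, hIm, ← MeasureTheory.integral_sub]
    · refine integral_congr_ae (Filter.Eventually.of_forall fun w => ?_)
      simp only [sub_smul]
    · exact cont_integrable_sphere' _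
        ((hf.continuous.comp (by fun_prop)).smul continuous_subtype_val)
    · exact cont_integrable_sphere' _
        ((hf.continuous.comp (by fun_prop)).smul continuous_subtype_val)
  have hSuniv : (σ Set.univ).toReal = n * V := by
    rw [hσ, Measure.toSphere_apply_univ, ENNReal.toReal_mul, ENNReal.toReal_natCast,
      finrank_euclideanSpace_fin, hV]
  rw [h1.gradient, hRHS, hSuniv, h5]
  rw [sub_neg_eq_add, smul_smul, ← two_smul ℝ Ip, smul_smul]
  congr 1
  have hn : ((n:ℝ)) ≠ 0 := Nat.cast_ne_zero.2 (NeZero.ne n)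
  field_simp

end Euclid
end Auxiliary

/-- Symmetric representation of the gradient of the uniform smoothing:
`∇f_μ(x) = (n/(2μ)) E_{W ~ Unif(S^{n-1})}[(f(x+μW) - f(x-μW)) W]`. -/
theorem smoothing_gradient_symmetric {n : ℕ} (f : EuclideanSpace ℝ (Fin n) → ℝ) (L : ℝ≥0)
    (hf : LipschitzWith L f) (μ : ℝ) (hμ : 0 < μ) (x : EuclideanSpace ℝ (Fin n)) :
    gradient (fun z => ∫ u, f (z + μ • u) ∂(unifBall n)) x =
      ((n : ℝ) / (2 * μ)) •
        ∫ w, (f (x + μ • w) - f (x - μ • w)) • w ∂(unifSphere n) := by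
  rcases Nat.eq_zero_or_pos n with hn0 | hnpos
  · subst hn0
    have h1 : (fun z : EuclideanSpace ℝ (Fin 0) => ∫ u, f (z + μ • u) ∂(unifBall 0))
        = fun _ => ∫ u, f (x + μ • u) ∂(unifBall 0) :=
      funext fun z => by rw [Subsingleton.elim z x]
    rw [h1, gradient_fun_const]
    simp
  · haveI : NeZero n := ⟨hnpos.ne'⟩
    exact smoothing_gradient_symmetric' f L hf μ hμ x
end

section
/- Let f : ℝⁿ → ℝ be L-Lipschitz and μ > 0. Then for all x ∈ ℝⁿ, the gradient of the uniform smoothing satisfies ∇f_μ(x) ∈ ∂̄_μ f(x), the μ-Goldstein subdifferential of f at x. -/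
open MeasureTheory Metric Filter
open scoped NNReal ENNReal Topology

variable {n : ℕ}

/-- Clarke generalized directional derivative of `f` at `x` in direction `v`. -/
noncomputable def clarkeDeriv (f : EuclideanSpace ℝ (Fin n) → ℝ)
    (x v : EuclideanSpace ℝ (Fin n)) : ℝ :=
  limsup (fun p : EuclideanSpace ℝ (Fin n) × ℝ => (f (p.1 + p.2 • v) - f p.1) / p.2)
    ((𝓝 x) ×ˢ (𝓝[>] (0 : ℝ)))

/-- Clarke subdifferential of `f` at `x`. -/
def clarkeSubdiff (f : EuclideanSpace ℝ (Fin n) → ℝ) (x : EuclideanSpace ℝ (Fin n)) :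
    Set (EuclideanSpace ℝ (Fin n)) :=
  {g | ∀ v, (inner ℝ g v : ℝ) ≤ clarkeDeriv f x v}

/-- The `μ`-Goldstein subdifferential `∂̄_μ f(x) = conv(⋃_{y ∈ B̄_μ(x)} ∂̄f(y))`. -/
def goldsteinSubdiff (μ : ℝ) (f : EuclideanSpace ℝ (Fin n) → ℝ)
    (x : EuclideanSpace ℝ (Fin n)) : Set (EuclideanSpace ℝ (Fin n)) :=
  convexHull ℝ (⋃ y ∈ closedBall x μ, clarkeSubdiff f y)

theorem myIsCompact_convexHull {E : Type} [NormedAddCommGroup E] [NormedSpace ℝ E]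
    [FiniteDimensional ℝ E] {s : Set E} (hs : IsCompact s) :
    IsCompact (convexHull ℝ s) := by
  rcases s.eq_empty_or_nonempty with rfl | ⟨s₀, hs₀⟩
  · simpa using isCompact_empty
  · set N := Module.finrank ℝ E + 1 with hN
    set T : (Fin N → ℝ) × (Fin N → E) → E := fun p => ∑ i, p.1 i • p.2 i with hT
    have hTc : Continuous T := by
      apply continuous_finset_sum
      intro i _
      exact ((continuous_apply i).comp continuous_fst).smul
        ((continuous_apply i).comp continuous_snd)
    set K : Set ((Fin N → ℝ) × (Fin N → E)) :=
      (stdSimplex ℝ (Fin N)) ×ˢ (Set.univ.pi fun _ : Fin N => s) with hKdef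
    have hK : IsCompact K := (isCompact_stdSimplex _ _).prod (isCompact_univ_pi fun _ => hs)
    have him : convexHull ℝ s = T '' K := by
      apply Set.Subset.antisymm
      · intro x hx
        rw [convexHull_eq_union] at hx
        simp only [Set.mem_iUnion] at hx
        obtain ⟨t, hts, hai, hxt⟩ := hx
        have hcard : t.card ≤ N := by
          have := hai.card_le_finrank_succ
          rw [Fintype.card_coe] at this
          exact le_trans this (Nat.add_le_add_right (Submodule.finrank_le _) 1)
        obtain ⟨e⟩ : Nonempty ((↥(t : Finset E)) ↪ Fin N) := by
          apply Function.Embedding.nonempty_of_card_le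
          simpa [Fintype.card_coe] using hcard
        rw [Finset.convexHull_eq] at hxt
        obtain ⟨w, hw0, hw1, hwx⟩ := hxt
        classical
        set w' : Fin N → ℝ := Function.extend e (fun y => w (y : E)) 0 with hw'
        set z' : Fin N → E := Function.extend e (fun y => (y : E)) (fun _ => s₀) with hz'
        have hred : ∀ {M : Type} [AddCommMonoid M] (φ : Fin N → M)
            (_ : ∀ i, (¬ ∃ y, e y = i) → φ i = 0),
            ∑ i, φ i = ∑ y : ↥(t : Finset E), φ (e y) := by
          intro M _ φ hφ
          rw [show (∑ i, φ i) = ∑ i ∈ Finset.univ.map e, φ i by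
            refine (Finset.sum_subset (Finset.subset_univ _) ?_).symm
            intro i _ hi
            exact hφ i (by simpa [Finset.mem_map] using hi)]
          rw [Finset.sum_map]
        have hw'sum : ∑ i, w' i = 1 := by
          rw [hred w' (fun i hi => by simp [hw', Function.extend_apply' _ _ _ hi])]
          rw [← hw1, ← Finset.sum_coe_sort t w]
          exact Finset.sum_congr rfl fun y _ => by simp [hw', e.injective.extend_apply]
        have hw'0 : ∀ i, 0 ≤ w' i := by
          intro i
          by_cases hi : ∃ y, e y = i
          · obtain ⟨y, rfl⟩ := hi
            rw [hw', e.injective.extend_apply]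
            exact hw0 _ y.2
          · simp [hw', Function.extend_apply' _ _ _ hi]
        have hz's : ∀ i, z' i ∈ s := by
          intro i
          by_cases hi : ∃ y, e y = i
          · obtain ⟨y, rfl⟩ := hi
            rw [hz', e.injective.extend_apply]
            exact hts y.2
          · simp only [hz', Function.extend_apply' _ _ _ hi]
            exact hs₀
        refine ⟨(w', z'), ⟨⟨fun i => hw'0 i, hw'sum⟩, fun i _ => hz's i⟩, ?_⟩
        show ∑ i, w' i • z' i = x
        have hzero : ∀ i, (¬ ∃ y, e y = i) → w' i • z' i = 0 := by
          intro i hi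
          simp [hw', Function.extend_apply' _ _ _ hi]
        rw [hred (fun i => w' i • z' i) hzero]
        rw [← hwx, Finset.centerMass_eq_of_sum_1 _ _ hw1, ← Finset.sum_coe_sort t]
        refine Finset.sum_congr rfl fun y _ => ?_
        simp [hw', hz', e.injective.extend_apply]
      · rintro x ⟨⟨w, z⟩, ⟨hw, hz⟩, rfl⟩
        refine (convex_convexHull ℝ s).sum_mem (fun i _ => hw.1 i) hw.2 ?_
        intro i _
        exact subset_convexHull ℝ s (hz i (Set.mem_univ i))
    rw [him]
    exact hK.image hTc


theorem volume_ball_pos (n : ℕ) :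
    0 < volume (closedBall (0 : EuclideanSpace ℝ (Fin n)) 1) :=
  measure_closedBall_pos _ _ one_pos

theorem volume_ball_lt_top (n : ℕ) :
    volume (closedBall (0 : EuclideanSpace ℝ (Fin n)) 1) < ⊤ :=
  measure_closedBall_lt_top

instance unifBall_prob (n : ℕ) : IsProbabilityMeasure (unifBall n) := by
  constructor
  rw [unifBall, Measure.smul_apply, Measure.restrict_apply MeasurableSet.univ, Set.univ_inter,
    smul_eq_mul]
  exact ENNReal.inv_mul_cancel (volume_ball_pos n).ne' (volume_ball_lt_top n).ne

theorem unifBall_ac (n : ℕ) :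
    unifBall n ≪ (volume : Measure (EuclideanSpace ℝ (Fin n))) := by
  intro s hs
  rw [unifBall, Measure.smul_apply, smul_eq_mul]
  have h1 : (volume : Measure (EuclideanSpace ℝ (Fin n))).restrict (closedBall 0 1) s = 0 :=
    le_antisymm (le_trans (Measure.restrict_le_self s) hs.le) (zero_le)
  rw [h1, mul_zero]

theorem unifBall_ae_mem (n : ℕ) :
    ∀ᵐ u ∂(unifBall n), u ∈ closedBall (0 : EuclideanSpace ℝ (Fin n)) 1 := by
  rw [unifBall]
  exact Measure.ae_smul_measure (ae_restrict_mem measurableSet_closedBall) _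

theorem ae_diff_unifBall {f : EuclideanSpace ℝ (Fin n) → ℝ} {L : ℝ≥0} (hf : LipschitzWith L f)
    (x : EuclideanSpace ℝ (Fin n)) {μ : ℝ} (hμ : 0 < μ) :
    ∀ᵐ u ∂(unifBall n), DifferentiableAt ℝ f (x + μ • u) := by
  have h0 : ∀ᵐ y ∂(volume : Measure (EuclideanSpace ℝ (Fin n))), DifferentiableAt ℝ f y :=
    hf.ae_differentiableAt
  have h1 : ∀ᵐ u ∂(volume : Measure (EuclideanSpace ℝ (Fin n))),
      DifferentiableAt ℝ f (x + μ • u) := by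
    rw [ae_iff] at h0 ⊢
    set N : Set (EuclideanSpace ℝ (Fin n)) := {y | ¬ DifferentiableAt ℝ f y} with hN
    have hpre : {u : EuclideanSpace ℝ (Fin n) | ¬ DifferentiableAt ℝ f (x + μ • u)} =
        (fun u : EuclideanSpace ℝ (Fin n) => μ • u) ⁻¹' ((fun w => x + w) ⁻¹' N) := by
      ext u; simp [hN]
    rw [hpre]
    have h2 : volume ((fun w : EuclideanSpace ℝ (Fin n) => x + w) ⁻¹' N) = 0 := by
      rwa [measure_preimage_add]
    -- preimage under scalar multiplication
    set M := (fun w : EuclideanSpace ℝ (Fin n) => x + w) ⁻¹' N with hM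
    have h3 : (fun u : EuclideanSpace ℝ (Fin n) => μ • u) =
        (μ • (LinearMap.id : EuclideanSpace ℝ (Fin n) →ₗ[ℝ] EuclideanSpace ℝ (Fin n)) :
          EuclideanSpace ℝ (Fin n) →ₗ[ℝ] EuclideanSpace ℝ (Fin n)) := by
      ext u; simp
    have hdet : LinearMap.det
        (μ • (LinearMap.id : EuclideanSpace ℝ (Fin n) →ₗ[ℝ] EuclideanSpace ℝ (Fin n))) ≠ 0 := by
      rw [LinearMap.det_smul, LinearMap.det_id, mul_one]
      exact pow_ne_zero _ hμ.ne'
    rw [h3, Measure.addHaar_preimage_linearMap volume hdet, h2, mul_zero]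
  exact h1.filter_mono (unifBall_ac n).ae_le


section lemmas

variable {f : EuclideanSpace ℝ (Fin n) → ℝ} {L : ℝ≥0} (hf : LipschitzWith L f)
  {x v y : EuclideanSpace ℝ (Fin n)}

theorem clarke_quot_abs_le (hf : LipschitzWith L f) (v : EuclideanSpace ℝ (Fin n))
    {z : EuclideanSpace ℝ (Fin n)} {t : ℝ} (ht : 0 < t) :
    |(f (z + t • v) - f z) / t| ≤ L * ‖v‖ := by
  rw [abs_div, abs_of_pos ht, div_le_iff₀ ht]
  have h1 : dist (f (z + t • v)) (f z) ≤ L * dist (z + t • v) z := hf.dist_le_mul _ _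
  rw [Real.dist_eq] at h1
  have h2 : dist (z + t • v) z = t * ‖v‖ := by
    rw [dist_eq_norm, add_sub_cancel_left, norm_smul, Real.norm_eq_abs, abs_of_pos ht]
  rw [h2] at h1
  calc |f (z + t • v) - f z| ≤ L * (t * ‖v‖) := h1
    _ = L * ‖v‖ * t := by ring

theorem clarke_event_bound (hf : LipschitzWith L f) (y v : EuclideanSpace ℝ (Fin n)) :
    ∀ᶠ p in ((𝓝 y) ×ˢ (𝓝[>] (0 : ℝ))),
      |(f (p.1 + p.2 • v) - f p.1) / p.2| ≤ L * ‖v‖ := by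
  filter_upwards [Filter.prod_mem_prod (Filter.univ_mem)
    (self_mem_nhdsWithin : Set.Ioi (0:ℝ) ∈ 𝓝[>] (0:ℝ))] with p hp
  exact clarke_quot_abs_le hf v hp.2

theorem clarke_isBoundedUnder_le (hf : LipschitzWith L f) (y v : EuclideanSpace ℝ (Fin n)) :
    IsBoundedUnder (· ≤ ·) ((𝓝 y) ×ˢ (𝓝[>] (0 : ℝ)))
      (fun p : EuclideanSpace ℝ (Fin n) × ℝ => (f (p.1 + p.2 • v) - f p.1) / p.2) :=
  ⟨L * ‖v‖, by
    rw [Filter.eventually_map]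
    exact (clarke_event_bound hf y v).mono fun p hp => (le_abs_self _).trans hp⟩

theorem clarke_isBoundedUnder_ge (hf : LipschitzWith L f) (y v : EuclideanSpace ℝ (Fin n)) :
    IsBoundedUnder (· ≥ ·) ((𝓝 y) ×ˢ (𝓝[>] (0 : ℝ)))
      (fun p : EuclideanSpace ℝ (Fin n) × ℝ => (f (p.1 + p.2 • v) - f p.1) / p.2) :=
  ⟨-(L * ‖v‖), by
    rw [Filter.eventually_map]
    exact (clarke_event_bound hf y v).mono fun p hp => neg_le_of_abs_le hp⟩

theorem clarke_cobounded (hf : LipschitzWith L f) (y v : EuclideanSpace ℝ (Fin n)) :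
    IsCoboundedUnder (· ≤ ·) ((𝓝 y) ×ˢ (𝓝[>] (0 : ℝ)))
      (fun p : EuclideanSpace ℝ (Fin n) × ℝ => (f (p.1 + p.2 • v) - f p.1) / p.2) :=
  (clarke_isBoundedUnder_ge hf y v).isCoboundedUnder_le

theorem clarkeDeriv_le (hf : LipschitzWith L f) (y v : EuclideanSpace ℝ (Fin n)) :
    clarkeDeriv f y v ≤ L * ‖v‖ :=
  Filter.limsup_le_of_le (clarke_cobounded hf y v)
    ((clarke_event_bound hf y v).mono fun p hp => (le_abs_self _).trans hp)

/-- Upper semicontinuity of the Clarke directional derivative. -/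
theorem clarkeDeriv_usc (hf : LipschitzWith L f) (v : EuclideanSpace ℝ (Fin n))
    {y : EuclideanSpace ℝ (Fin n)} {c : ℝ} (h : clarkeDeriv f y v < c) :
    ∀ᶠ y' in 𝓝 y, clarkeDeriv f y' v ≤ c := by
  have hev : ∀ᶠ p in ((𝓝 y) ×ˢ (𝓝[>] (0 : ℝ))),
      (f (p.1 + p.2 • v) - f p.1) / p.2 < c :=
    Filter.eventually_lt_of_limsup_lt h (clarke_isBoundedUnder_le hf y v)
  rw [Filter.eventually_prod_iff] at hev
  obtain ⟨pa, ha, pb, hb, himp⟩ := hev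
  filter_upwards [ha.eventually_nhds] with y' ha'
  refine Filter.limsup_le_of_le (clarke_cobounded hf y' v) ?_
  filter_upwards [Filter.prod_mem_prod (ha' : {z | pa z} ∈ 𝓝 y') hb] with p hp
  exact le_of_lt (himp hp.1 hp.2)

theorem gradient_mem_clarkeSubdiff (hf : LipschitzWith L f)
    {y : EuclideanSpace ℝ (Fin n)} (hd : DifferentiableAt ℝ f y) :
    gradient f y ∈ clarkeSubdiff f y := by
  intro v
  have hinner : (inner ℝ (gradient f y) v : ℝ) = fderiv ℝ f y v := by
    rw [gradient, InnerProductSpace.toDual_symm_apply]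
  rw [hinner]
  -- the difference quotient tends to `fderiv ℝ f y v` along `t → 0⁺`
  have h1 : HasDerivAt (fun t : ℝ => y + t • v) v 0 := by
    simpa using ((hasDerivAt_id (0:ℝ)).smul_const v).const_add y
  have hy0 : y + (0:ℝ) • v = y := by simp
  have h2 : HasDerivAt (fun t : ℝ => f (y + t • v)) (fderiv ℝ f y v) 0 := by
    have hfd : HasFDerivAt f (fderiv ℝ f y) (y + (0:ℝ) • v) := by
      rw [hy0]; exact hd.hasFDerivAt
    exact hfd.comp_hasDerivAt 0 h1
  have h3 : Tendsto (fun t : ℝ => (f (y + t • v) - f y) / t) (𝓝[>] (0:ℝ))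
      (𝓝 (fderiv ℝ f y v)) := by
    have h4 := hasDerivAt_iff_tendsto_slope.1 h2
    have h5 := h4.mono_left (nhdsWithin_mono (0:ℝ) (fun t ht => ne_of_gt ht))
    refine h5.congr' ?_
    filter_upwards [self_mem_nhdsWithin] with t ht
    rw [slope_def_field]
    simp [hy0]
  -- now push the limit below the limsup
  set u : EuclideanSpace ℝ (Fin n) × ℝ → ℝ :=
    fun p => (f (p.1 + p.2 • v) - f p.1) / p.2 with hu
  have hG : Tendsto (fun t : ℝ => ((y, t) : EuclideanSpace ℝ (Fin n) × ℝ)) (𝓝[>] (0:ℝ))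
      ((𝓝 y) ×ˢ (𝓝[>] (0:ℝ))) := tendsto_const_nhds.prodMk tendsto_id
  by_contra hcon
  push_neg at hcon
  obtain ⟨c, hc1, hc2⟩ := exists_between hcon
  have hfreq : ∃ᶠ p in ((𝓝 y) ×ˢ (𝓝[>] (0:ℝ))), c ≤ u p := by
    have hev : ∀ᶠ t in 𝓝[>] (0:ℝ), c < u (y, t) :=
      h3.eventually (eventually_gt_nhds hc2)
    have h6 : ∀ᶠ t in 𝓝[>] (0:ℝ), c ≤ u (y, t) := hev.mono fun t ht => le_of_lt ht
    exact hG.frequently h6.frequently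
  exact absurd (Filter.le_limsup_of_frequently_le hfreq (clarke_isBoundedUnder_le hf y v))
    (not_le.2 hc1)

end lemmas

section main

/-- The union of Clarke subdifferentials over the closed ball is compact. -/
theorem unionClarke_isCompact {f : EuclideanSpace ℝ (Fin n) → ℝ} {L : ℝ≥0}
    (hf : LipschitzWith L f) (x : EuclideanSpace ℝ (Fin n)) (μ : ℝ) :
    IsCompact (⋃ y ∈ closedBall x μ, clarkeSubdiff f y) := by
  set S := ⋃ y ∈ closedBall x μ, clarkeSubdiff f y with hS
  have hbdd : S ⊆ closedBall 0 L := by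
    intro g hg
    rw [Set.mem_iUnion₂] at hg
    obtain ⟨y, hy, hgy⟩ := hg
    rw [mem_closedBall_zero_iff]
    have h1 : (inner ℝ g g : ℝ) ≤ clarkeDeriv f y g := hgy g
    have h2 : clarkeDeriv f y g ≤ L * ‖g‖ := clarkeDeriv_le hf y g
    rw [real_inner_self_eq_norm_mul_norm] at h1
    rcases eq_or_lt_of_le (norm_nonneg g) with h0 | h0
    · rw [← h0]; exact L.coe_nonneg
    · exact le_of_mul_le_mul_right (h1.trans h2) h0
  have hclosed : IsClosed S := by
    apply IsSeqClosed.isClosed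
    intro g g₀ hmem hg
    choose y hy hgy using fun k => Set.mem_iUnion₂.1 (hmem k)
    obtain ⟨y₀, hy₀, φ, hφ, hyφ⟩ := (isCompact_closedBall x μ).tendsto_subseq hy
    refine Set.mem_iUnion₂.2 ⟨y₀, hy₀, fun v => ?_⟩
    refine le_of_forall_gt_imp_ge_of_dense fun c hc => ?_
    have husc : ∀ᶠ y' in 𝓝 y₀, clarkeDeriv f y' v ≤ c := clarkeDeriv_usc hf v hc
    have hev : ∀ᶠ k in atTop, clarkeDeriv f (y (φ k)) v ≤ c := hyφ.eventually husc
    have h1 : ∀ᶠ k in atTop, (inner ℝ (g (φ k)) v : ℝ) ≤ c :=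
      hev.mono fun k hk => (hgy (φ k) v).trans hk
    have h2 : Tendsto (fun k => (inner ℝ (g (φ k)) v : ℝ)) atTop (𝓝 (inner ℝ g₀ v)) :=
      (hg.comp hφ.tendsto_atTop).inner tendsto_const_nhds
    exact le_of_tendsto h2 h1
  exact Metric.isCompact_of_isClosed_isBounded hclosed (isBounded_closedBall.subset hbdd)


/-- The gradient of the uniform smoothing of an `L`-Lipschitz `f` belongs to the
`μ`-Goldstein subdifferential of `f`. -/
theorem smoothing_gradient_mem_goldstein (f : EuclideanSpace ℝ (Fin n) → ℝ) (L : ℝ≥0)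
    (hf : LipschitzWith L f) (μ : ℝ) (hμ : 0 < μ) (x : EuclideanSpace ℝ (Fin n)) :
    gradient (fun z => ∫ u, f (z + μ • u) ∂(unifBall n)) x ∈ goldsteinSubdiff μ f x := by
  classical
  set ν := unifBall n with hν
  set F' : EuclideanSpace ℝ (Fin n) → (EuclideanSpace ℝ (Fin n) →L[ℝ] ℝ) :=
    fun a => fderiv ℝ f (x + μ • a) with hF'
  have hmap : Measurable fun a : EuclideanSpace ℝ (Fin n) => x + μ • a :=
    (measurable_id.const_smul μ).const_add x
  have hcontmap : Continuous fun a : EuclideanSpace ℝ (Fin n) => x + μ • a :=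
    continuous_const.add (continuous_id.const_smul μ)
  have hdiff_ae : ∀ᵐ a ∂ν, HasFDerivAt (fun z => f (z + μ • a)) (F' a) x := by
    filter_upwards [ae_diff_unifBall hf x hμ] with a ha
    have h1 : HasFDerivAt (fun z : EuclideanSpace ℝ (Fin n) => z + μ • a)
        (ContinuousLinearMap.id ℝ (EuclideanSpace ℝ (Fin n))) x :=
      (hasFDerivAt_id x).add_const (μ • a)
    have h2 := ha.hasFDerivAt.comp x h1
    simpa [Function.comp_def, ContinuousLinearMap.comp_id] using h2
  have key := hasFDerivAt_integral_of_dominated_loc_of_lip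
    (F := fun (z : EuclideanSpace ℝ (Fin n)) (a : EuclideanSpace ℝ (Fin n)) => f (z + μ • a))
    (F' := F') (x₀ := x) (bound := fun _ => (L : ℝ)) (s := Set.univ) Filter.univ_mem
    (Eventually.of_forall fun z => by
      have hc : Continuous fun a : EuclideanSpace ℝ (Fin n) => f (z + μ • a) :=
        hf.continuous.comp (continuous_const.add (continuous_id.const_smul μ))
      exact hc.aestronglyMeasurable)
    (by
      rw [hν, unifBall]
      refine Integrable.smul_measure ?_ (ENNReal.inv_ne_top.2 (volume_ball_pos n).ne')
      have hc : Continuous fun a : EuclideanSpace ℝ (Fin n) => f (x + μ • a) :=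
        hf.continuous.comp (continuous_const.add (continuous_id.const_smul μ))
      exact hc.continuousOn.integrableOn_compact (isCompact_closedBall _ _))
    (((measurable_fderiv ℝ f).comp hmap).aestronglyMeasurable)
    (Eventually.of_forall fun a => by
      have h1 : LipschitzWith (Real.nnabs ((L : ℝ)))
          (fun z : EuclideanSpace ℝ (Fin n) => f (z + μ • a)) := by
        have hL : Real.nnabs (L : ℝ) = L := by ext; simp
        rw [hL]
        intro z w
        simpa [edist_add_right] using hf (z + μ • a) (w + μ • a)
      exact h1.lipschitzOnWith)
    (integrable_const _)
    hdiff_ae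
  obtain ⟨hF'int, hderiv⟩ := key
  -- identify the gradient
  have hgrad : gradient (fun z => ∫ u, f (z + μ • u) ∂ν) x
      = ∫ a, (InnerProductSpace.toDual ℝ (EuclideanSpace ℝ (Fin n))).symm (F' a) ∂ν := by
    rw [gradient, hderiv.fderiv]
    exact ((InnerProductSpace.toDual ℝ
      (EuclideanSpace ℝ (Fin n))).symm.toLinearIsometry.integral_comp_comm _).symm
  rw [hgrad]
  -- apply the mean-value property of the Bochner integral
  set S := ⋃ y ∈ closedBall x μ, clarkeSubdiff f y with hS
  have hScpt : IsCompact S := unionClarke_isCompact hf x μ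
  have hCcpt : IsCompact (convexHull ℝ S) := myIsCompact_convexHull hScpt
  have hmem_ae : ∀ᵐ a ∂ν, (InnerProductSpace.toDual ℝ
      (EuclideanSpace ℝ (Fin n))).symm (F' a) ∈ convexHull ℝ S := by
    filter_upwards [ae_diff_unifBall hf x hμ, unifBall_ae_mem n] with a ha hb
    refine subset_convexHull ℝ S ?_
    rw [hS, Set.mem_iUnion₂]
    refine ⟨x + μ • a, ?_, ?_⟩
    · rw [mem_closedBall]
      have : dist (x + μ • a) x = μ * ‖a‖ := by
        rw [dist_eq_norm, add_sub_cancel_left, norm_smul, Real.norm_eq_abs, abs_of_pos hμ]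
      rw [this]
      calc μ * ‖a‖ ≤ μ * 1 := by
            have := mem_closedBall_zero_iff.1 hb
            exact mul_le_mul_of_nonneg_left this hμ.le
        _ = μ := mul_one μ
    · exact gradient_mem_clarkeSubdiff hf ha
  have hint : Integrable (fun a => (InnerProductSpace.toDual ℝ
      (EuclideanSpace ℝ (Fin n))).symm (F' a)) ν := by
    exact ((InnerProductSpace.toDual ℝ (EuclideanSpace ℝ
      (Fin n))).symm.toLinearIsometry.toContinuousLinearMap.integrable_comp hF'int)
  exact (convex_convexHull ℝ S).integral_mem hCcpt.isClosed hmem_ae hint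

end main
end

section
/- Let f : ℝⁿ → ℝ be L-Lipschitz. Then for any x, x' ∈ ℝⁿ there exist λ ∈ (0,1) and g ∈ ∂̄f(λx + (1-λ)x') such that f(x) - f(x') = gᵀ(x - x') (Lebourg mean value theorem). -/
open Filter
open scoped NNReal Topology

variable {n : ℕ}

namespace LebourgAux

variable {f : EuclideanSpace ℝ (Fin n) → ℝ} {L : ℝ≥0}

/-- The difference quotient appearing in the Clarke derivative. -/
noncomputable def quot (f : EuclideanSpace ℝ (Fin n) → ℝ) (v : EuclideanSpace ℝ (Fin n))
    (p : EuclideanSpace ℝ (Fin n) × ℝ) : ℝ :=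
  (f (p.1 + p.2 • v) - f p.1) / p.2

lemma clarkeDeriv_eq (f : EuclideanSpace ℝ (Fin n) → ℝ) (z v : EuclideanSpace ℝ (Fin n)) :
    clarkeDeriv f z v = limsup (quot f v) ((𝓝 z) ×ˢ (𝓝[>] (0:ℝ))) := rfl

lemma quot_bound (hf : LipschitzWith L f) (z v : EuclideanSpace ℝ (Fin n)) :
    ∀ᶠ p in (𝓝 z) ×ˢ (𝓝[>] (0:ℝ)), |quot f v p| ≤ L * ‖v‖ := by
  filter_upwards [Filter.prod_mem_prod Filter.univ_mem self_mem_nhdsWithin] with p hp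
  have h2 : (0:ℝ) < p.2 := hp.2
  rw [quot, abs_div, abs_of_pos h2, div_le_iff₀ h2]
  calc |f (p.1 + p.2 • v) - f p.1| = dist (f (p.1 + p.2 • v)) (f p.1) := (Real.dist_eq _ _).symm
    _ ≤ L * dist (p.1 + p.2 • v) p.1 := hf.dist_le_mul _ _
    _ = L * ‖v‖ * p.2 := by
        rw [dist_self_add_left, norm_smul, Real.norm_eq_abs, abs_of_pos h2]; ring

lemma bddAbove' (hf : LipschitzWith L f) (z v : EuclideanSpace ℝ (Fin n)) :
    IsBoundedUnder (· ≤ ·) ((𝓝 z) ×ˢ (𝓝[>] (0:ℝ))) (quot f v) :=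
  isBoundedUnder_of_eventually_le ((quot_bound hf z v).mono fun _ h => (abs_le.1 h).2)

lemma bddBelow' (hf : LipschitzWith L f) (z v : EuclideanSpace ℝ (Fin n)) :
    IsBoundedUnder (· ≥ ·) ((𝓝 z) ×ˢ (𝓝[>] (0:ℝ))) (quot f v) :=
  isBoundedUnder_of_eventually_ge ((quot_bound hf z v).mono fun _ h => (abs_le.1 h).1)

/-- Key lemma: a lower bound on difference quotients along a moving base point gives a lower
bound on the Clarke derivative. -/
lemma le_clarkeDeriv_of (hf : LipschitzWith L f) {z v : EuclideanSpace ℝ (Fin n)} {c : ℝ}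
    (b : ℝ → EuclideanSpace ℝ (Fin n)) (hb : Tendsto b (𝓝[>] (0:ℝ)) (𝓝 z))
    (h : ∀ᶠ t in 𝓝[>] (0:ℝ), c ≤ (f (b t + t • v) - f (b t)) / t) :
    c ≤ clarkeDeriv f z v := by
  rw [clarkeDeriv_eq]
  set m : ℝ → EuclideanSpace ℝ (Fin n) × ℝ := fun t => (b t, t) with hm
  have hmap : Tendsto m (𝓝[>] (0:ℝ)) ((𝓝 z) ×ˢ (𝓝[>] (0:ℝ))) := hb.prodMk tendsto_id
  have hev : ∀ᶠ t in 𝓝[>] (0:ℝ), |quot f v (m t)| ≤ L * ‖v‖ := hmap.eventually (quot_bound hf z v)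
  have h1 : c ≤ limsup (fun t => quot f v (m t)) (𝓝[>] (0:ℝ)) := by
    refine le_limsup_of_le (isBoundedUnder_of_eventually_le (hev.mono fun _ h => (abs_le.1 h).2))
      (fun d hd => ?_)
    obtain ⟨t, h1, h2⟩ := (h.and hd).exists
    exact h1.trans h2
  have h2 : limsup (fun t => quot f v (m t)) (𝓝[>] (0:ℝ))
      = limsup (quot f v) (map m (𝓝[>] (0:ℝ))) := by
    simp [Filter.limsup, Filter.map_map]; rfl
  rw [h2] at h1
  refine h1.trans (limsup_le_limsup_of_le hmap ?_ (bddAbove' hf z v))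
  have : ∀ᶠ p in map m (𝓝[>] (0:ℝ)), -(L * ‖v‖) ≤ quot f v p :=
    eventually_map.2 (hev.mono fun _ h => (abs_le.1 h).1)
  exact (isBoundedUnder_of_eventually_ge this).isCoboundedUnder_le

lemma map_mul_nhdsGT {t : ℝ} (ht : 0 < t) :
    map (fun s : ℝ => t * s) (𝓝[>] (0:ℝ)) = 𝓝[>] (0:ℝ) := by
  have key : ∀ u : ℝ, 0 < u → Tendsto (fun s : ℝ => u * s) (𝓝[>] (0:ℝ)) (𝓝[>] (0:ℝ)) := by
    intro u hu
    apply tendsto_nhdsWithin_of_tendsto_nhds_of_eventually_within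
    · have : Tendsto (fun s : ℝ => u * s) (𝓝 (0:ℝ)) (𝓝 (u * 0)) :=
        (continuous_const.mul continuous_id).tendsto 0
      rw [mul_zero] at this
      exact this.mono_left nhdsWithin_le_nhds
    · filter_upwards [self_mem_nhdsWithin] with s hs
      exact mul_pos hu hs
  refine le_antisymm (key t ht) ?_
  calc 𝓝[>] (0:ℝ) = map (fun s => t * s) (map (fun s => t⁻¹ * s) (𝓝[>] (0:ℝ))) := by
        rw [Filter.map_map]
        convert (Filter.map_id).symm using 2
        ext s; simp only [Function.comp_apply, id]; field_simp
    _ ≤ map (fun s => t * s) (𝓝[>] (0:ℝ)) := map_mono (key t⁻¹ (inv_pos.2 ht))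

lemma quot_smul (f : EuclideanSpace ℝ (Fin n) → ℝ) (v : EuclideanSpace ℝ (Fin n)) {t : ℝ}
    (ht : 0 < t) (p : EuclideanSpace ℝ (Fin n) × ℝ) :
    quot f (t • v) p = t * quot f v (p.1, t * p.2) := by
  rcases eq_or_ne p.2 0 with h | h
  · simp [quot, h]
  · unfold quot
    rw [smul_smul, mul_comm p.2 t]
    simp only
    field_simp [h, ht.ne']

lemma quot_add (f : EuclideanSpace ℝ (Fin n) → ℝ) (a b : EuclideanSpace ℝ (Fin n))
    (p : EuclideanSpace ℝ (Fin n) × ℝ) :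
    quot f (a + b) p = quot f a p + quot f b (p.1 + p.2 • a, p.2) := by
  unfold quot
  rw [← add_div, smul_add, add_assoc]
  ring_nf

lemma clarke_zero (f : EuclideanSpace ℝ (Fin n) → ℝ) (z : EuclideanSpace ℝ (Fin n)) :
    clarkeDeriv f z (0 : EuclideanSpace ℝ (Fin n)) = 0 := by
  rw [clarkeDeriv_eq]
  have : quot f (0 : EuclideanSpace ℝ (Fin n)) = fun _ => (0:ℝ) := by
    funext p; simp [quot]
  rw [this, limsup_const]

lemma clarke_smul (hf : LipschitzWith L f) (z v : EuclideanSpace ℝ (Fin n)) {t : ℝ} (ht : 0 < t) :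
    clarkeDeriv f z (t • v) = t * clarkeDeriv f z v := by
  rw [clarkeDeriv_eq, clarkeDeriv_eq]
  set F := (𝓝 z) ×ˢ (𝓝[>] (0:ℝ)) with hF
  set σ : EuclideanSpace ℝ (Fin n) × ℝ → EuclideanSpace ℝ (Fin n) × ℝ :=
    fun p => (p.1, t * p.2) with hσdef
  have hσ : map σ F = F := by
    have : σ = Prod.map id (fun s => t * s) := rfl
    rw [this, hF, ← Filter.prod_map_right, map_mul_nhdsGT ht]
  have hcongr : quot f (t • v) = (fun p => t * quot f v p) ∘ σ := by
    funext p; exact quot_smul f v ht p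
  let e : ℝ ≃o ℝ := OrderIso.mulLeft₀ t ht
  have hgu : IsBoundedUnder (· ≤ ·) F (fun p => t * quot f v p) := by
    obtain ⟨B, hB⟩ := bddAbove' hf z v
    exact isBoundedUnder_of_eventually_le
      ((eventually_map.1 hB).mono fun p hp => mul_le_mul_of_nonneg_left hp ht.le)
  have hgu_co : IsCoboundedUnder (· ≤ ·) F (fun p => t * quot f v p) := by
    obtain ⟨B, hB⟩ := bddBelow' hf z v
    exact (isBoundedUnder_of_eventually_ge
      ((eventually_map.1 hB).mono fun p hp =>
        mul_le_mul_of_nonneg_left hp ht.le)).isCoboundedUnder_le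
  have step3 : limsup (fun p => t * quot f v p) F = t * limsup (quot f v) F := by
    have h3 : IsBoundedUnder (· ≤ ·) F (fun x => e (quot f v x)) := hgu
    have h4 : IsCoboundedUnder (· ≤ ·) F (fun x => e (quot f v x)) := hgu_co
    have h5 := e.limsup_apply (u := quot f v) (f := F) (bddAbove' hf z v)
      ((bddBelow' hf z v).isCoboundedUnder_le) h3 h4
    exact h5.symm
  calc limsup (quot f (t • v)) F = limsup (fun p => t * quot f v p) (map σ F) := by
        rw [hcongr]
        simp only [Filter.limsup, Filter.map_map]
    _ = limsup (fun p => t * quot f v p) F := by rw [hσ]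
    _ = t * limsup (quot f v) F := step3

lemma clarke_add (hf : LipschitzWith L f) (z a b : EuclideanSpace ℝ (Fin n)) :
    clarkeDeriv f z (a + b) ≤ clarkeDeriv f z a + clarkeDeriv f z b := by
  rw [clarkeDeriv_eq, clarkeDeriv_eq, clarkeDeriv_eq]
  set F := (𝓝 z) ×ˢ (𝓝[>] (0:ℝ)) with hF
  set τ : EuclideanSpace ℝ (Fin n) × ℝ → EuclideanSpace ℝ (Fin n) × ℝ :=
    fun p => (p.1 + p.2 • a, p.2) with hτdef
  have hτ : Tendsto τ F F := by
    refine Tendsto.prodMk ?_ tendsto_snd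
    have h0 : Tendsto (fun p : EuclideanSpace ℝ (Fin n) × ℝ => p.2) F (𝓝 (0:ℝ)) :=
      tendsto_snd.mono_right nhdsWithin_le_nhds
    have := tendsto_fst.add (h0.smul_const a)
    simpa using this
  have hevb : ∀ᶠ p in F, |quot f b (τ p)| ≤ L * ‖b‖ := hτ.eventually (quot_bound hf z b)
  have hcongr : quot f (a + b) = quot f a + fun p => quot f b (τ p) := by
    funext p; exact quot_add f a b p
  rw [hcongr]
  have step1 : limsup (quot f a + fun p => quot f b (τ p)) F
      ≤ limsup (quot f a) F + limsup (fun p => quot f b (τ p)) F :=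
    limsup_add_le (bddBelow' hf z a) (bddAbove' hf z a)
      ((isBoundedUnder_of_eventually_ge (hevb.mono fun _ h => (abs_le.1 h).1)).isCoboundedUnder_le)
      (isBoundedUnder_of_eventually_le (hevb.mono fun _ h => (abs_le.1 h).2))
  refine step1.trans (add_le_add le_rfl ?_)
  have step2 : limsup (fun p => quot f b (τ p)) F = limsup (quot f b) (map τ F) := by
    simp only [Filter.limsup, Filter.map_map]; rfl
  rw [step2]
  refine limsup_le_limsup_of_le hτ ?_ (bddAbove' hf z b)
  have : ∀ᶠ p in map τ F, -(L * ‖b‖) ≤ quot f b p :=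
    eventually_map.2 (hevb.mono fun _ h => (abs_le.1 h).1)
  exact (isBoundedUnder_of_eventually_ge this).isCoboundedUnder_le

end LebourgAux

set_option maxHeartbeats 1000000 in
/-- Lebourg mean value theorem: for `L`-Lipschitz `f` and any `x, x'` there exist
`λ ∈ (0,1)` and `g ∈ ∂̄f(λx + (1-λ)x')` with `f(x) - f(x') = ⟪g, x - x'⟫`. -/
theorem lebourg_mean_value (f : EuclideanSpace ℝ (Fin n) → ℝ) (L : ℝ≥0)
    (hf : LipschitzWith L f) (x x' : EuclideanSpace ℝ (Fin n)) :
    ∃ lam ∈ Set.Ioo (0 : ℝ) 1, ∃ g ∈ clarkeSubdiff f (lam • x + (1 - lam) • x'),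
      f x - f x' = (inner ℝ g (x - x') : ℝ) := by
  classical
  open LebourgAux in
  set v : EuclideanSpace ℝ (Fin n) := x - x' with hv
  set c : ℝ := f x - f x' with hc
  -- Step 1: find an interior extremum point of the auxiliary function φ
  set φ : ℝ → ℝ := fun t => f (x' + t • v) - t * c with hφ
  have hφc : Continuous φ := by
    exact (hf.continuous.comp (continuous_const.add (continuous_id.smul continuous_const))).sub
      (continuous_id.mul continuous_const)
  have hφ0 : φ 0 = f x' := by simp [hφ]
  have hx'v : x' + (1:ℝ) • v = x := by rw [hv]; module
  have hφ1 : φ 1 = f x' := by rw [hφ]; simp only [one_mul, hx'v, hc]; ring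
  obtain ⟨tmax, htmaxmem, htmax⟩ :=
    isCompact_Icc.exists_isMaxOn (Set.nonempty_Icc.2 zero_le_one) hφc.continuousOn
  obtain ⟨tmin, htminmem, htmin⟩ :=
    isCompact_Icc.exists_isMinOn (Set.nonempty_Icc.2 zero_le_one) hφc.continuousOn
  rw [isMaxOn_iff] at htmax
  rw [isMinOn_iff] at htmin
  have hkey : ∃ t₀ ∈ Set.Ioo (0:ℝ) 1,
      (∀ t ∈ Set.Icc (0:ℝ) 1, φ t₀ ≤ φ t) ∨ (∀ t ∈ Set.Icc (0:ℝ) 1, φ t ≤ φ t₀) := by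
    by_cases hmax0 : φ tmax = φ 0
    · by_cases hmin0 : φ tmin = φ 0
      · refine ⟨1/2, by norm_num, Or.inl fun t ht => ?_⟩
        have h1 : φ (1/2) ≤ φ tmax := htmax _ (by norm_num)
        exact (h1.trans_eq (hmax0.trans hmin0.symm)).trans (htmin t ht)
      · refine ⟨tmin, ⟨?_, ?_⟩, Or.inl htmin⟩
        · rcases eq_or_lt_of_le htminmem.1 with h | h
          · exact absurd (by rw [← h]) hmin0
          · exact h
        · rcases eq_or_lt_of_le htminmem.2 with h | h
          · exact absurd (by rw [h, hφ1, ← hφ0]) hmin0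
          · exact h
    · refine ⟨tmax, ⟨?_, ?_⟩, Or.inr htmax⟩
      · rcases eq_or_lt_of_le htmaxmem.1 with h | h
        · exact absurd (by rw [← h]) hmax0
        · exact h
      · rcases eq_or_lt_of_le htmaxmem.2 with h | h
        · exact absurd (by rw [h, hφ1, ← hφ0]) hmax0
        · exact h
  obtain ⟨t₀, ht₀, hcase⟩ := hkey
  set z : EuclideanSpace ℝ (Fin n) := x' + t₀ • v with hz
  have hzcomb : t₀ • x + (1 - t₀) • x' = z := by rw [hz, hv]; module
  -- Step 2: `c ≤ f°(z, v)` and `-c ≤ f°(z, -v)`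
  have h1 : c ≤ clarkeDeriv f z v := by
    rcases hcase with hmin | hmax
    · refine le_clarkeDeriv_of hf (fun _ => z) tendsto_const_nhds ?_
      have hS : Set.Ioo (0:ℝ) (1 - t₀) ∈ 𝓝[>] (0:ℝ) :=
        Ioo_mem_nhdsGT_of_mem ⟨le_refl (0:ℝ), by linarith [ht₀.2]⟩
      filter_upwards [hS] with t ht
      have hmem : t₀ + t ∈ Set.Icc (0:ℝ) 1 := ⟨by linarith [ht₀.1, ht.1], by linarith [ht.2]⟩
      have hle := hmin _ hmem
      have hrw : x' + (t₀ + t) • v = z + t • v := by rw [hz]; module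
      simp only [hφ, hrw, ← hz] at hle
      rw [le_div_iff₀ ht.1]
      nlinarith [hle]
    · refine le_clarkeDeriv_of hf (fun t => z + t • (-v)) ?_ ?_
      · have h0 : Tendsto (fun t : ℝ => t) (𝓝[>] (0:ℝ)) (𝓝 (0:ℝ)) :=
          tendsto_id.mono_right nhdsWithin_le_nhds
        have hconst : Tendsto (fun _ : ℝ => z) (𝓝[>] (0:ℝ)) (𝓝 z) := tendsto_const_nhds
        have := hconst.add (h0.smul_const (-v))
        simpa using this
      · have hS : Set.Ioo (0:ℝ) t₀ ∈ 𝓝[>] (0:ℝ) :=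
          Ioo_mem_nhdsGT_of_mem ⟨le_refl (0:ℝ), ht₀.1⟩
        filter_upwards [hS] with t ht
        have hmem : t₀ - t ∈ Set.Icc (0:ℝ) 1 := ⟨by linarith [ht.2], by linarith [ht₀.2, ht.1]⟩
        have hle := hmax _ hmem
        have hrw : x' + (t₀ - t) • v = z + t • (-v) := by rw [hz]; module
        have hrw2 : z + t • (-v) + t • v = z := by module
        simp only [hφ, hrw, ← hz] at hle
        rw [hrw2, le_div_iff₀ ht.1]
        nlinarith [hle]
  have h2 : -c ≤ clarkeDeriv f z (-v) := by
    rcases hcase with hmin | hmax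
    · refine le_clarkeDeriv_of hf (fun _ => z) tendsto_const_nhds ?_
      have hS : Set.Ioo (0:ℝ) t₀ ∈ 𝓝[>] (0:ℝ) :=
        Ioo_mem_nhdsGT_of_mem ⟨le_refl (0:ℝ), ht₀.1⟩
      filter_upwards [hS] with t ht
      have hmem : t₀ - t ∈ Set.Icc (0:ℝ) 1 := ⟨by linarith [ht.2], by linarith [ht₀.2, ht.1]⟩
      have hle := hmin _ hmem
      have hrw : x' + (t₀ - t) • v = z + t • (-v) := by rw [hz]; module
      simp only [hφ, hrw, ← hz] at hle
      rw [le_div_iff₀ ht.1]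
      nlinarith [hle]
    · refine le_clarkeDeriv_of hf (fun t => z + t • v) ?_ ?_
      · have h0 : Tendsto (fun t : ℝ => t) (𝓝[>] (0:ℝ)) (𝓝 (0:ℝ)) :=
          tendsto_id.mono_right nhdsWithin_le_nhds
        have hconst : Tendsto (fun _ : ℝ => z) (𝓝[>] (0:ℝ)) (𝓝 z) := tendsto_const_nhds
        have := hconst.add (h0.smul_const v)
        simpa using this
      · have hS : Set.Ioo (0:ℝ) (1 - t₀) ∈ 𝓝[>] (0:ℝ) :=
          Ioo_mem_nhdsGT_of_mem ⟨le_refl (0:ℝ), by linarith [ht₀.2]⟩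
        filter_upwards [hS] with t ht
        have hmem : t₀ + t ∈ Set.Icc (0:ℝ) 1 := ⟨by linarith [ht₀.1, ht.1], by linarith [ht.2]⟩
        have hle := hmax _ hmem
        have hrw : x' + (t₀ + t) • v = z + t • v := by rw [hz]; module
        have hrw2 : z + t • v + t • (-v) = z := by module
        simp only [hφ, hrw, ← hz] at hle
        rw [hrw2, le_div_iff₀ ht.1]
        nlinarith [hle]
  -- Step 3: Hahn–Banach to produce the subgradient
  by_cases hv0 : v = 0
  · -- degenerate case x = x'
    have hc0 : c = 0 := by
      have : x = x' := by rwa [hv, sub_eq_zero] at hv0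
      rw [hc, this, sub_self]
    obtain ⟨g, hg1, hg2⟩ := exists_extension_of_le_sublinear
      ((0 : EuclideanSpace ℝ (Fin n) →ₗ[ℝ] ℝ).toPMap ⊥) (clarkeDeriv f z)
      (fun r hr w => clarke_smul hf z w hr)
      (fun a b => clarke_add hf z a b)
      (fun w => by
        have hw0 : (w : EuclideanSpace ℝ (Fin n)) = 0 := (Submodule.mem_bot ℝ).1 w.2
        simp [LinearMap.toPMap, hw0, clarke_zero f z]; exact le_of_eq rfl)
    set gv := (InnerProductSpace.toDual ℝ (EuclideanSpace ℝ (Fin n))).symm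
      (LinearMap.toContinuousLinearMap g) with hgv
    have hinner : ∀ w, (inner ℝ gv w : ℝ) = g w := fun w => InnerProductSpace.toDual_symm_apply
    refine ⟨t₀, ht₀, gv, ?_, ?_⟩
    · rw [hzcomb]
      intro w
      rw [hinner]
      exact hg2 w
    · show c = inner ℝ gv v
      rw [hinner, hv0, map_zero, hc0]
  · obtain ⟨g, hg1, hg2⟩ := exists_extension_of_le_sublinear
      (LinearPMap.mkSpanSingleton v c hv0) (clarkeDeriv f z)
      (fun r hr w => clarke_smul hf z w hr)
      (fun a b => clarke_add hf z a b)
      (fun w => by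
        obtain ⟨r, hr⟩ := Submodule.mem_span_singleton.1 w.2
        have hw : w = ⟨r • v, hr ▸ w.2⟩ := Subtype.ext hr.symm
        rw [hw, LinearPMap.mkSpanSingleton'_apply]
        show r • c ≤ clarkeDeriv f z (r • v)
        rcases lt_trichotomy r 0 with h | h | h
        · have hrv : r • v = (-r) • (-v) := by module
          rw [hrv, clarke_smul hf z (-v) (neg_pos.2 h)]
          have := mul_le_mul_of_nonneg_left h2 (neg_nonneg.2 h.le)
          simp only [smul_eq_mul]
          nlinarith [this]
        · rw [h, zero_smul, zero_smul, clarke_zero f z]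
        · rw [clarke_smul hf z v h]
          have := mul_le_mul_of_nonneg_left h1 h.le
          simp only [smul_eq_mul]
          linarith [this])
    have hgvc : g v = c := by
      have := hg1 ⟨v, Submodule.mem_span_singleton_self v⟩
      rwa [LinearPMap.mkSpanSingleton_apply] at this
    set gv := (InnerProductSpace.toDual ℝ (EuclideanSpace ℝ (Fin n))).symm
      (LinearMap.toContinuousLinearMap g) with hgv
    have hinner : ∀ w, (inner ℝ gv w : ℝ) = g w := fun w => InnerProductSpace.toDual_symm_apply
    refine ⟨t₀, ht₀, gv, ?_, ?_⟩
    · rw [hzcomb]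
      intro w
      rw [hinner]
      exact hg2 w
    · show c = inner ℝ gv v
      rw [hinner, hgvc]
end

section
/- Let φ = f_μ + r with f_μ differentiable with ρ-Lipschitz gradient and r proper, closed, convex. Fix ρ̄ ∈ (ρ, 2ρ], α > 0 and set ζ = 1 - αρ̄. If x̂ = prox_{ρ̄^{-1}φ}(x), then x̂ satisfies the fixed-point equation x̂ = prox_{αr}(αρ̄ x - α∇f_μ(x̂) + ζ x̂). -/
set_option maxHeartbeats 1000000


open scoped NNReal

variable {n : ℕ}

/-- Fixed-point characterization of the proximal point of `φ = f_μ + r`: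
if `xh = prox_{ρ̄⁻¹ φ}(x)` then `xh = prox_{α r}(α ρ̄ x - α ∇f_μ(xh) + ζ xh)`
with `ζ = 1 - α ρ̄`. The proximal points are expressed as minimizers. -/
theorem prox_fixed_point (ρ : ℝ≥0) (hρ : 0 < ρ)
    (fμ : EuclideanSpace ℝ (Fin n) → ℝ) (hfμ : Differentiable ℝ fμ)
    (hgrad : LipschitzWith ρ (gradient fμ))
    (r : EuclideanSpace ℝ (Fin n) → ℝ) (hr : ConvexOn ℝ Set.univ r)
    (hrlsc : LowerSemicontinuous r)
    (ρb : ℝ) (hρb : ρb ∈ Set.Ioc (ρ : ℝ) (2 * ρ)) (α : ℝ) (hα : 0 < α)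
    (ζ : ℝ) (hζ : ζ = 1 - α * ρb) (x xh : EuclideanSpace ℝ (Fin n))
    (hxh : IsMinOn (fun w => fμ w + r w + (ρb / 2) * ‖w - x‖ ^ 2) Set.univ xh) :
    IsMinOn (fun w =>
        r w + (1 / (2 * α)) * ‖w - ((α * ρb) • x - α • gradient fμ xh + ζ • xh)‖ ^ 2)
      Set.univ xh := by
  have hρ' : (0:ℝ) < ρ := hρ
  have hρb0 : 0 < ρb := lt_trans hρ' hρb.1
  -- key subgradient inequality
  have key : ∀ w : EuclideanSpace ℝ (Fin n),
      0 ≤ inner ℝ (gradient fμ xh) (w - xh) + ρb * inner ℝ (xh - x) (w - xh) + (r w - r xh) := by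
    intro w
    set d := w - xh with hd
    set A : ℝ := inner ℝ (gradient fμ xh) d + ρb * inner ℝ (xh - x) d + (r w - r xh) with hA
    set B : ℝ := ((ρ:ℝ) + ρb / 2) * ‖d‖ ^ 2 with hB
    have hB0 : 0 ≤ B := by positivity
    have h1 : ∀ t : ℝ, t ∈ Set.Ioc (0:ℝ) 1 → 0 ≤ A + t * B := by
      intro t ht
      obtain ⟨ht0, ht1⟩ := ht
      set wt := xh + t • d with hwt
      have hwtsub : wt - xh = t • d := by simp [hwt]
      have hnorm_td : ‖t • d‖ = t * ‖d‖ := by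
        rw [norm_smul, Real.norm_eq_abs, abs_of_pos ht0]
      -- r convexity
      have hrineq : r wt ≤ (1 - t) * r xh + t * r w := by
        have := hr.2 (Set.mem_univ xh) (Set.mem_univ w) (by linarith : (0:ℝ) ≤ 1 - t)
          (le_of_lt ht0) (by ring)
        have hcomb : (1 - t) • xh + t • w = wt := by
          rw [hwt, hd]; module
        rw [hcomb] at this
        simpa using this
      -- descent-type bound
      have hfineq : fμ wt ≤ fμ xh + t * inner ℝ (gradient fμ xh) d + (ρ:ℝ) * t ^ 2 * ‖d‖ ^ 2 := by
        have hmem1 : xh ∈ Metric.closedBall xh (t * ‖d‖) := by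
          simp [Metric.mem_closedBall]; positivity
        have hmem2 : wt ∈ Metric.closedBall xh (t * ‖d‖) := by
          simp only [Metric.mem_closedBall, dist_eq_norm, hwt, add_sub_cancel_left, hnorm_td]
          exact le_rfl
        have hbound : ∀ z ∈ Metric.closedBall xh (t * ‖d‖),
            ‖fderiv ℝ fμ z - fderiv ℝ fμ xh‖ ≤ (ρ:ℝ) * (t * ‖d‖) := by
          intro z hz
          have heq : ‖fderiv ℝ fμ z - fderiv ℝ fμ xh‖ = ‖gradient fμ z - gradient fμ xh‖ := by
            have hz' : fderiv ℝ fμ z = InnerProductSpace.toDual ℝ _ (gradient fμ z) := by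
              simp [gradient]
            have hx' : fderiv ℝ fμ xh = InnerProductSpace.toDual ℝ _ (gradient fμ xh) := by
              simp [gradient]
            rw [hz', hx', ← map_sub, LinearIsometryEquiv.norm_map]
          rw [heq]
          calc ‖gradient fμ z - gradient fμ xh‖ ≤ (ρ:ℝ) * ‖z - xh‖ := by
                have := hgrad.dist_le_mul z xh
                simpa [dist_eq_norm] using this
            _ ≤ (ρ:ℝ) * (t * ‖d‖) := by
                apply mul_le_mul_of_nonneg_left _ (le_of_lt hρ')
                simpa [Metric.mem_closedBall, dist_eq_norm] using hz
        have hmvt := (convex_closedBall xh (t * ‖d‖)).norm_image_sub_le_of_norm_fderiv_le'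
          (f := fμ) (φ := fderiv ℝ fμ xh) (C := (ρ:ℝ) * (t * ‖d‖))
          (fun z _ => hfμ z) hbound hmem1 hmem2
        rw [hwtsub, hnorm_td] at hmvt
        have happ : (fderiv ℝ fμ xh) (t • d) = t * inner ℝ (gradient fμ xh) d := by
          simp [gradient, real_inner_smul_right]
        rw [happ] at hmvt
        rw [Real.norm_eq_abs] at hmvt
        have := (abs_le.mp hmvt).2
        nlinarith [norm_nonneg d]
      -- minimality at wt
      have hmin := hxh (Set.mem_univ wt)
      simp only [Set.mem_setOf_eq] at hmin
      -- norm expansion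
      have hexp : ‖wt - x‖ ^ 2 = ‖xh - x‖ ^ 2 + 2 * t * inner ℝ (xh - x) d + t ^ 2 * ‖d‖ ^ 2 := by
        have : wt - x = (xh - x) + t • d := by rw [hwt]; abel
        rw [this, norm_add_sq_real, real_inner_smul_right, norm_smul, Real.norm_eq_abs,
          abs_of_pos ht0, mul_pow]
        ring
      rw [hexp] at hmin
      -- combine
      have hcomb : 0 ≤ t * A + t ^ 2 * B := by
        rw [hA, hB]
        nlinarith [hmin, hfineq, hrineq]
      have : 0 ≤ A + t * B := by
        have := (mul_le_mul_iff_right₀ ht0).mp (by nlinarith : t * 0 ≤ t * (A + t * B))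
        linarith [this]
      exact this
    -- pass to the limit t → 0⁺
    by_contra hcon
    push_neg at hcon
    rcases eq_or_lt_of_le hB0 with hB0' | hB0'
    · have := h1 1 ⟨one_pos, le_refl 1⟩
      rw [← hB0'] at this; linarith
    · set t := min 1 (-A / (2 * B)) with htdef
      have htpos : 0 < t := lt_min one_pos (div_pos (by linarith) (by linarith))
      have ht1 : t ≤ 1 := min_le_left _ _
      have := h1 t ⟨htpos, ht1⟩
      have h2 : t * B ≤ (-A / (2 * B)) * B :=
        mul_le_mul_of_nonneg_right (min_le_right _ _) hB0
      have h3 : (-A / (2 * B)) * B = -A / 2 := by field_simp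
      linarith
  -- conclude
  intro w _
  simp only [Set.mem_setOf_eq]
  set v := (α * ρb) • x - α • gradient fμ xh + ζ • xh with hv
  have hxv : xh - v = (α * ρb) • (xh - x) + α • gradient fμ xh := by
    rw [hv, hζ]; module
  have hexp2 : ‖w - v‖ ^ 2 = ‖xh - v‖ ^ 2 + 2 * inner ℝ (xh - v) (w - xh) + ‖w - xh‖ ^ 2 := by
    have : w - v = (xh - v) + (w - xh) := by abel
    rw [this, norm_add_sq_real]
  have hinner : (inner ℝ (xh - v) (w - xh) : ℝ) =
      (α * ρb) * inner ℝ (xh - x) (w - xh) + α * inner ℝ (gradient fμ xh) (w - xh) := by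
    rw [hxv, inner_add_left, real_inner_smul_left, real_inner_smul_left]
  have hk := key w
  have hα' : (0:ℝ) < 2 * α := by linarith
  rw [hexp2, hinner]
  have hn : 0 ≤ ‖w - xh‖ ^ 2 := by positivity
  have expand : r xh + (1 / (2*α)) * ‖xh - v‖ ^ 2 ≤
      r w + (1 / (2*α)) * (‖xh - v‖ ^ 2 +
        2 * ((α * ρb) * inner ℝ (xh - x) (w - xh) + α * inner ℝ (gradient fμ xh) (w - xh)) +
        ‖w - xh‖ ^ 2) := by
    have h4 : (1 / (2*α)) * (2 * ((α * ρb) * inner ℝ (xh - x) (w - xh)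
        + α * inner ℝ (gradient fμ xh) (w - xh))) =
        ρb * inner ℝ (xh - x) (w - xh) + inner ℝ (gradient fμ xh) (w - xh) := by
      field_simp
    nlinarith [mul_le_mul_of_nonneg_left hn (le_of_lt (by positivity : (0:ℝ) < 1/(2*α))), h4]
  linarith [expand]
end
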